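/- arXiv:1708.02839 — 8 statements merged into one kernel-verified Lean document; each statement's English description precedes it below -/
import Mathlib

section
/- Let s ∈ (0,1) and let x, y, p, q ∈ ℝ be points with |x-p| ≤ |y-q|, and suppose there is r > 0 and C ∈ (0,1) such that |p-q|^s = C^s·r, |x-p|^s ≥ r, and |y-p|^s ≥ r. Then |x-y|^s ≤ (s/(1-C))·|x-p|^s + |q-y|^s. -/
/-- Improved triangle inequality for the snowflaked distance `|x-y|^s` on `ℝ`:
if `|x-p| ≤ |y-q|`, `|p-q|^s = C^s·r`, `|x-p|^s ≥ r` and `|y-p|^s ≥ r`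
with `r > 0` and `C ∈ (0,1)`, then `|x-y|^s ≤ (s/(1-C))·|x-p|^s + |q-y|^s`. -/
theorem snowflake_improved_triangle (s : ℝ) (hs : 0 < s) (hs1 : s < 1)
    (x y p q r C : ℝ) (hr : 0 < r) (hC0 : 0 < C) (hC1 : C < 1)
    (hxpyq : |x - p| ≤ |y - q|)
    (hpq : |p - q| ^ s = C ^ s * r)
    (hxp : r ≤ |x - p| ^ s)
    (hyp : r ≤ |y - p| ^ s) :
    |x - y| ^ s ≤ s / (1 - C) * |x - p| ^ s + |q - y| ^ s := by
  set a := |x - p| with ha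
  have ha0 : 0 ≤ a := abs_nonneg _
  -- a > 0
  have hapos : 0 < a := by
    rcases ha0.lt_or_eq with h | h
    · exact h
    · exfalso
      rw [← h, Real.zero_rpow hs.ne'] at hxp
      exact absurd hxp (not_le.mpr hr)
  set b := |q - y| with hb
  have hab : a ≤ b := by rwa [hb, abs_sub_comm q y]
  have hbpos : 0 < b := lt_of_lt_of_le hapos hab
  -- |p - q| ≤ C * a
  have hpqa : |p - q| ≤ C * a := by
    have h1 : |p - q| ^ s ≤ (C * a) ^ s := by
      rw [hpq, Real.mul_rpow hC0.le ha0]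
      exact mul_le_mul_of_nonneg_left hxp (Real.rpow_nonneg hC0.le s)
    exact (Real.rpow_le_rpow_iff (abs_nonneg _) (by positivity) hs).mp h1
  -- |x - y| ≤ b + (1 + C) * a
  have hxy : |x - y| ≤ b + (1 + C) * a := by
    calc |x - y| = |(x - p) + (p - q) + (q - y)| := by ring_nf
    _ ≤ |x - p| + |p - q| + |q - y| :=
      (abs_add_le _ _).trans (add_le_add_left (abs_add_le _ _) _)
    _ ≤ a + C * a + b := by
      exact add_le_add (add_le_add le_rfl hpqa) le_rfl
    _ = b + (1 + C) * a := by ring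
  -- key concavity bound: (b + t)^s ≤ b^s + s * t * b^(s-1)
  set t := (1 + C) * a with ht
  have ht0 : 0 ≤ t := by positivity
  have key : (b + t) ^ s ≤ b ^ s + s * t * b ^ (s - 1) := by
    have hbern : (1 + t / b) ^ s ≤ 1 + s * (t / b) :=
      rpow_one_add_le_one_add_mul_self
        (le_trans (by norm_num : (-1:ℝ) ≤ 0) (by positivity)) hs.le hs1.le
    have h2 : (b + t) ^ s = b ^ s * (1 + t / b) ^ s := by
      rw [← Real.mul_rpow hbpos.le (by positivity)]
      congr 1
      field_simp
    rw [h2]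
    calc b ^ s * (1 + t / b) ^ s ≤ b ^ s * (1 + s * (t / b)) :=
      mul_le_mul_of_nonneg_left hbern (Real.rpow_nonneg hbpos.le s)
    _ = b ^ s + s * t * (b ^ s / b) := by ring
    _ = b ^ s + s * t * b ^ (s - 1) := by
      rw [Real.rpow_sub_one hbpos.ne']
  -- b ^ (s-1) ≤ a ^ (s-1)
  have hba : b ^ (s - 1) ≤ a ^ (s - 1) :=
    Real.rpow_le_rpow_of_nonpos hapos hab (by linarith)
  have hmono : |x - y| ^ s ≤ (b + t) ^ s :=
    Real.rpow_le_rpow (abs_nonneg _) hxy hs.le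
  have hfin : s * t * b ^ (s - 1) ≤ s / (1 - C) * a ^ s := by
    have h3 : s * t * b ^ (s - 1) ≤ s * t * a ^ (s - 1) :=
      mul_le_mul_of_nonneg_left hba (by positivity)
    have h4 : s * t * a ^ (s - 1) = s * (1 + C) * a ^ s := by
      rw [ht, Real.rpow_sub_one hapos.ne']
      field_simp
    have h5 : s * (1 + C) ≤ s / (1 - C) := by
      rw [le_div_iff₀ (by linarith : (0:ℝ) < 1 - C)]
      nlinarith [mul_pos hs (mul_pos hC0 hC0)]
    calc s * t * b ^ (s - 1) ≤ s * (1 + C) * a ^ s := h3.trans_eq h4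
    _ ≤ s / (1 - C) * a ^ s := mul_le_mul_of_nonneg_right h5 (Real.rpow_nonneg hapos.le s)
  calc |x - y| ^ s ≤ (b + t) ^ s := hmono
  _ ≤ b ^ s + s * t * b ^ (s - 1) := key
  _ ≤ b ^ s + s / (1 - C) * a ^ s := add_le_add le_rfl hfin
  _ = s / (1 - C) * a ^ s + b ^ s := by ring
end

section
/- For every s ∈ (0,1) and every λ with 0 < λ < (1-s)^s, the metric space (ℝ, |x-y|^s) has λ-invisible pieces: for every r > 0 and every ball B of radius r (in the snowflaked metric), there exist points p, q ∈ B with |p-q|^s ≥ λr such that for all x, y outside B, |x-y|^s ≤ |x-p|^s + |q-y|^s. -/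
/-- Subadditivity of `x ↦ x ^ s` on nonnegative reals for `0 ≤ s ≤ 1`. -/
lemma rpow_subadd_aux (s : ℝ) (hs0 : 0 ≤ s) (hs1 : s ≤ 1) {a b : ℝ}
    (ha : 0 ≤ a) (hb : 0 ≤ b) : (a + b) ^ s ≤ a ^ s + b ^ s := by
  have h := NNReal.rpow_add_le_add_rpow a.toNNReal b.toNNReal hs0 hs1
  rw [← Real.toNNReal_add ha hb] at h
  have h' := NNReal.coe_le_coe.2 h
  rw [NNReal.coe_add] at h'
  rw [NNReal.coe_rpow, NNReal.coe_rpow, NNReal.coe_rpow,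
    Real.coe_toNNReal _ (add_nonneg ha hb), Real.coe_toNNReal _ ha,
    Real.coe_toNNReal _ hb] at h'
  exact h'

/-- The increments of the concave function `x ↦ x ^ s` are antitone:
`(b+d+g)^s + b^s ≤ (b+d)^s + (b+g)^s`. -/
lemma rpow_diff_antitone_aux (s : ℝ) (hs0 : 0 ≤ s) (hs1 : s ≤ 1) {b d g : ℝ}
    (hb : 0 ≤ b) (hd : 0 ≤ d) (hg : 0 ≤ g) :
    (b + d + g) ^ s + b ^ s ≤ (b + d) ^ s + (b + g) ^ s := by
  rcases eq_or_lt_of_le (add_nonneg hd hg) with h | h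
  · have hd0 : d = 0 := by linarith
    have hg0 : g = 0 := by linarith
    simp [hd0, hg0]
  · set l1 : ℝ := g / (d + g) with hl1def
    set l2 : ℝ := d / (d + g) with hl2def
    have hl1 : 0 ≤ l1 := div_nonneg hg h.le
    have hl2 : 0 ≤ l2 := div_nonneg hd h.le
    have hsum : l1 + l2 = 1 := by
      rw [hl1def, hl2def, ← add_div, add_comm g d]
      field_simp
    have hl1' : l1 * (d + g) = g := by
      rw [hl1def]; field_simp
    have hl2' : l2 * (d + g) = d := by
      rw [hl2def]; field_simp
    have hcv := Real.concaveOn_rpow hs0 hs1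
    have hmem1 : b ∈ Set.Ici (0:ℝ) := Set.mem_Ici.2 hb
    have hmem2 : b + d + g ∈ Set.Ici (0:ℝ) := Set.mem_Ici.2 (by linarith)
    have h1 := hcv.2 hmem1 hmem2 hl1 hl2 hsum
    have h2 := hcv.2 hmem1 hmem2 hl2 hl1 (by linarith)
    simp only [smul_eq_mul] at h1 h2
    have e1 : l1 * b + l2 * (b + d + g) = b + d := by
      linear_combination b * hsum + hl2'
    have e2 : l2 * b + l1 * (b + d + g) = b + g := by
      linear_combination b * hsum + hl1'
    rw [e1] at h1
    rw [e2] at h2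
    calc (b + d + g) ^ s + b ^ s
        = (l1 + l2) * (b ^ s + (b + d + g) ^ s) := by rw [hsum]; ring
      _ = (l1 * b ^ s + l2 * (b + d + g) ^ s)
          + (l2 * b ^ s + l1 * (b + d + g) ^ s) := by ring
      _ ≤ (b + d) ^ s + (b + g) ^ s := add_le_add h1 h2

/-- Helper: if `|w| ≤ u + v` with `0 ≤ u ≤ a`, `0 ≤ v ≤ b`, then `|w|^s ≤ a^s + b^s`. -/
lemma rpow_abs_helper (s : ℝ) (hs0 : 0 ≤ s) (hs1 : s ≤ 1) {w u v a b : ℝ}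
    (hu : 0 ≤ u) (hv : 0 ≤ v) (hw : |w| ≤ u + v) (hua : u ≤ a) (hvb : v ≤ b) :
    |w| ^ s ≤ a ^ s + b ^ s := by
  calc |w| ^ s ≤ (u + v) ^ s := Real.rpow_le_rpow (abs_nonneg w) hw hs0
    _ ≤ u ^ s + v ^ s := rpow_subadd_aux s hs0 hs1 hu hv
    _ ≤ a ^ s + b ^ s :=
      add_le_add (Real.rpow_le_rpow hu hua hs0) (Real.rpow_le_rpow hv hvb hs0)

/-- The key corner inequality: `2^s ≤ 1 + s^s` for `0 < s < 1`. -/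
lemma two_rpow_le_aux (s : ℝ) (hs : 0 < s) (hs1 : s < 1) :
    (2:ℝ) ^ s ≤ 1 + s ^ s := by
  have h1 : (2:ℝ) ^ s ≤ 1 + s := by
    have := rpow_one_add_le_one_add_mul_self (s := (1:ℝ)) (p := s)
      (by norm_num) hs.le hs1.le
    norm_num at this
    linarith
  have h2 : s ≤ s ^ s := by
    have := Real.rpow_le_rpow_of_exponent_ge hs hs1.le hs1.le
    rwa [Real.rpow_one] at this
  linarith

/-- For every `s ∈ (0,1)` and `0 < λ < (1-s)^s`, the snowflaked line `(ℝ, |x-y|^s)`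
has `λ`-invisible pieces: for every `r > 0` and every ball (for the snowflaked metric)
of radius `r` and center `c`, there exist `p, q` in the ball with `|p-q|^s ≥ λ·r` such
that for all `x, y` outside the ball, `|x-y|^s ≤ |x-p|^s + |q-y|^s`. -/
theorem snowflake_has_invisible_pieces (s lam : ℝ) (hs : 0 < s) (hs1 : s < 1)
    (hlam0 : 0 < lam) (hlam : lam < (1 - s) ^ s) :
    ∀ r : ℝ, 0 < r → ∀ c : ℝ, ∃ p q : ℝ,
      |p - c| ^ s < r ∧ |q - c| ^ s < r ∧ lam * r ≤ |p - q| ^ s ∧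
      ∀ x y : ℝ, ¬ (|x - c| ^ s < r) → ¬ (|y - c| ^ s < r) →
        |x - y| ^ s ≤ |x - p| ^ s + |q - y| ^ s := by
  intro r hr c
  set R : ℝ := r ^ (1/s) with hRdef
  have hR : 0 < R := Real.rpow_pos_of_pos hr _
  have hRs : R ^ s = r := by
    rw [hRdef, ← Real.rpow_mul hr.le, one_div, inv_mul_cancel₀ hs.ne', Real.rpow_one]
  have h1s : 0 < 1 - s := by linarith
  have hsR : 0 < s * R := by positivity
  have hsplit : (1 - s) * R = R - s * R := by ring
  have h1Rpos : 0 < (1 - s) * R := mul_pos h1s hR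
  have hps : ((1 - s) * R) ^ s = (1 - s) ^ s * r := by
    rw [Real.mul_rpow h1s.le hR.le, hRs]
  have hlt1 : (1 - s) ^ s < 1 := Real.rpow_lt_one h1s.le (by linarith) hs
  refine ⟨c - (1 - s) * R, c, ?_, ?_, ?_, ?_⟩
  · have : |c - (1 - s) * R - c| = (1 - s) * R := by
      rw [show c - (1 - s) * R - c = -((1 - s) * R) by ring, abs_neg,
        abs_of_nonneg (by positivity)]
    rw [this, hps]
    calc (1 - s) ^ s * r < 1 * r := mul_lt_mul_of_pos_right hlt1 hr
      _ = r := one_mul r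
  · simp only [sub_self, abs_zero]
    rw [Real.zero_rpow hs.ne']
    exact hr
  · have : |c - (1 - s) * R - c| = (1 - s) * R := by
      rw [show c - (1 - s) * R - c = -((1 - s) * R) by ring, abs_neg,
        abs_of_nonneg (by positivity)]
    rw [this, hps]
    exact mul_le_mul_of_nonneg_right hlam.le hr.le
  · intro x y hx hy
    set p : ℝ := c - (1 - s) * R with hpdef
    -- from non-membership get distance at least R
    have hx' : R ≤ |x - c| := by
      by_contra hcon
      push_neg at hcon
      exact hx (by rw [← hRs]; exact Real.rpow_lt_rpow (abs_nonneg _) hcon hs)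
    have hy' : R ≤ |y - c| := by
      by_contra hcon
      push_neg at hcon
      exact hy (by rw [← hRs]; exact Real.rpow_lt_rpow (abs_nonneg _) hcon hs)
    rcases le_abs'.mp hx' with hxL | hxR
    · -- x ≤ c - R
      have hxc : x ≤ c - R := by linarith
      have hxp : |x - p| = p - x := by
        rw [abs_of_nonpos (by rw [hpdef, hsplit]; linarith)]; ring
      rcases le_abs'.mp hy' with hyL | hyR
      · -- y ≤ c - R : same side
        have hyc : y ≤ c - R := by linarith
        have hqy : |c - y| = c - y := abs_of_nonneg (by linarith)
        rw [hxp, hqy]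
        have habs : |x - y| ≤ ((c - R) - x) + ((c - R) - y) :=
          abs_le.mpr ⟨by linarith, by linarith⟩
        calc |x - y| ^ s ≤ (((c-R) - x) + ((c-R) - y)) ^ s :=
              Real.rpow_le_rpow (abs_nonneg _) habs hs.le
          _ ≤ ((c-R) - x) ^ s + ((c-R) - y) ^ s :=
              rpow_subadd_aux s hs.le hs1.le (by linarith) (by linarith)
          _ ≤ (p - x) ^ s + (c - y) ^ s := by
              refine add_le_add (Real.rpow_le_rpow (by linarith) ?_ hs.le)
                (Real.rpow_le_rpow (by linarith) (by linarith) hs.le)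
              rw [hpdef, hsplit]; linarith
      · -- c + R ≤ y : opposite sides, the main case
        have hyc : c + R ≤ y := by linarith
        set d : ℝ := (p - x) - s * R with hddef
        set k : ℝ := (y - c) - R with hkdef
        have hd : 0 ≤ d := by rw [hddef, hpdef, hsplit]; linarith
        have hk : 0 ≤ k := by rw [hkdef]; linarith
        have hxyv : |x - y| = 2 * R + d + k := by
          rw [abs_of_nonpos (by linarith), hddef, hkdef, hpdef]; ring
        have hqy : |c - y| = R + k := by
          rw [abs_of_nonpos (by linarith), hkdef]; ring
        have hxpv : |x - p| = s * R + d := by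
          rw [hxp, hddef]; ring
        rw [hxyv, hxpv, hqy]
        -- key chain of inequalities
        have step1 : (2 * R + d + k) ^ s + R ^ s ≤ (R + k) ^ s + (2 * R + d) ^ s := by
          have := rpow_diff_antitone_aux s hs.le hs1.le hR.le hk
            (add_nonneg hR.le hd)
          calc (2 * R + d + k) ^ s + R ^ s
              = (R + k + (R + d)) ^ s + R ^ s := by ring_nf
            _ ≤ (R + k) ^ s + (R + (R + d)) ^ s := this
            _ = (R + k) ^ s + (2 * R + d) ^ s := by ring_nf
        have step2 : (2 * R + d) ^ s + (s * R) ^ s ≤ (s * R + d) ^ s + (2 * R) ^ s := by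
          have := rpow_diff_antitone_aux s hs.le hs1.le
            (by positivity : (0:ℝ) ≤ s * R) hd
            (by rw [show (2 - s) * R = R + (1 - s) * R by ring, hsplit]; linarith
              : (0:ℝ) ≤ (2 - s) * R)
          calc (2 * R + d) ^ s + (s * R) ^ s
              = (s * R + d + (2 - s) * R) ^ s + (s * R) ^ s := by ring_nf
            _ ≤ (s * R + d) ^ s + (s * R + (2 - s) * R) ^ s := this
            _ = (s * R + d) ^ s + (2 * R) ^ s := by ring_nf
        have step3 : (2 * R) ^ s ≤ R ^ s + (s * R) ^ s := by
          have e1 : (2 * R) ^ s = 2 ^ s * R ^ s :=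
            Real.mul_rpow (by norm_num) hR.le
          have e2 : (s * R) ^ s = s ^ s * R ^ s :=
            Real.mul_rpow hs.le hR.le
          have h2s := two_rpow_le_aux s hs hs1
          have hRspos : 0 < R ^ s := Real.rpow_pos_of_pos hR s
          rw [e1, e2]
          calc 2 ^ s * R ^ s ≤ (1 + s ^ s) * R ^ s :=
                mul_le_mul_of_nonneg_right h2s hRspos.le
            _ = R ^ s + s ^ s * R ^ s := by ring
        linarith
    · -- c + R ≤ x
      have hxc : c + R ≤ x := by linarith
      have hxp : |x - p| = x - p := by
        rw [abs_of_nonneg (by rw [hpdef, hsplit]; linarith)]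
      rcases le_abs'.mp hy' with hyL | hyR
      · -- y ≤ c - R : opposite sides, easy direction
        have hyc : y ≤ c - R := by linarith
        have hqy : |c - y| = c - y := abs_of_nonneg (by linarith)
        rw [hxp, hqy]
        refine rpow_abs_helper s hs.le hs1.le (u := x - p) (v := p - y)
          ?_ ?_ ?_ le_rfl ?_
        · rw [hpdef, hsplit]; linarith
        · rw [hpdef, hsplit]; linarith
        · exact abs_le.mpr ⟨by linarith, by linarith⟩
        · rw [hpdef, hsplit]; linarith
      · -- c + R ≤ y : same side
        have hyc : c + R ≤ y := by linarith
        have hqy : |c - y| = y - c := by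
          rw [abs_of_nonpos (by linarith)]; ring
        rw [hxp, hqy]
        refine rpow_abs_helper s hs.le hs1.le (u := x - (c + R)) (v := y - (c + R))
          (by linarith) (by linarith) ?_ ?_ (by linarith)
        · exact abs_le.mpr ⟨by linarith, by linarith⟩
        · rw [hpdef, hsplit]; linarith
end

section
/- Let (X,d) be an Ahlfors α-regular metric space. If a sequence of compact subsets K_n converges to a compact set K in the Hausdorff distance, then limsup_{n→∞} H^α(K_n) ≤ H^α(K), where H^α is the α-dimensional Hausdorff measure on X. -/
open MeasureTheory Filter
open scoped ENNReal Topology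

/-- In an Ahlfors `α`-regular metric space, if a sequence of compact sets `Kₙ`
converges to a compact set `K` in the Hausdorff distance, then
`limsup H^α(Kₙ) ≤ H^α(K)`. -/
theorem limsup_hausdorffMeasure_le_of_hausdorffDist_tendsto
    {X : Type*} [MetricSpace X] [MeasurableSpace X] [BorelSpace X] [CompleteSpace X]
    (α : ℝ) (hα : 0 < α) (C : ℝ≥0∞) (hC0 : 0 < C) (hCtop : C ≠ ⊤)
    (hreg : ∀ (x : X) (r : ℝ≥0∞), 0 < r → r ≠ ⊤ → r ≤ EMetric.diam (Set.univ : Set X) →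
      C⁻¹ * r ^ α ≤ μH[α] (EMetric.ball x r) ∧ μH[α] (EMetric.ball x r) ≤ C * r ^ α)
    (K : ℕ → Set X) (K' : Set X) (hK : ∀ n, IsCompact (K n)) (hK' : IsCompact K')
    (hconv : Tendsto (fun n => EMetric.hausdorffEdist (K n) K') atTop (nhds 0)) :
    limsup (fun n => μH[α] (K n)) atTop ≤ μH[α] K' := by
  -- Step 1: some closed thickening of `K'` has finite measure.
  have hfin : ∃ R > (0 : ℝ), μH[α] (Metric.cthickening R K') ≠ ⊤ := by
    rcases K'.eq_empty_or_nonempty with rfl | ⟨x₀, hx₀⟩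
    · exact ⟨1, one_pos, by simp [Metric.cthickening_empty]⟩
    set d := EMetric.diam (Set.univ : Set X) with hd
    by_cases hd0 : d = 0
    · -- the whole space is a subsingleton
      refine ⟨1, one_pos, ?_⟩
      have hsub : (Set.univ : Set X).Subsingleton := by
        intro a _ b _
        rw [← edist_eq_zero]
        exact le_antisymm
          ((EMetric.edist_le_diam_of_mem (Set.mem_univ a) (Set.mem_univ b)).trans hd0.le)
          zero_le
      have h1 : μH[α] (Metric.cthickening 1 K') ≤ 1 := by
        refine le_trans (measure_mono (Set.subset_univ _)) ?_
        exact MeasureTheory.Measure.hausdorffMeasure_le_one_of_subsingleton hsub hα.le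
      exact ne_top_of_le_ne_top ENNReal.one_ne_top h1
    · -- choose a suitable radius ε with 3ε ≤ diam
      obtain ⟨ε, hε0, hε3⟩ : ∃ ε : ℝ, 0 < ε ∧ ENNReal.ofReal (3 * ε) ≤ d := by
        rcases eq_or_ne d ⊤ with hdt | hdt
        · exact ⟨1, one_pos, by simp [hdt]⟩
        · have hdtr : 0 < d.toReal := ENNReal.toReal_pos hd0 hdt
          refine ⟨d.toReal / 3, by positivity, ?_⟩
          have h3 : (3 : ℝ) * (d.toReal / 3) = d.toReal := by ring
          rw [h3, ENNReal.ofReal_toReal hdt]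
      obtain ⟨t, htf, hcov⟩ := EMetric.totallyBounded_iff.1 hK'.totallyBounded
        (ENNReal.ofReal ε) (ENNReal.ofReal_pos.2 hε0)
      refine ⟨ε, hε0, ?_⟩
      have hsub : Metric.cthickening ε K' ⊆ ⋃ y ∈ t, EMetric.ball y (ENNReal.ofReal (3 * ε)) := by
        intro x hx
        have h1 : EMetric.infEdist x K' ≤ ENNReal.ofReal ε := Metric.mem_cthickening_iff.1 hx
        have h2 : EMetric.infEdist x K' < ENNReal.ofReal (2 * ε) :=
          lt_of_le_of_lt h1 (ENNReal.ofReal_lt_ofReal_iff (by linarith)|>.2 (by linarith))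
        obtain ⟨y, hyK, hxy⟩ := EMetric.infEdist_lt_iff.1 h2
        obtain ⟨z, hzt, hyz⟩ := Set.mem_iUnion₂.1 (hcov hyK)
        refine Set.mem_iUnion₂.2 ⟨z, hzt, ?_⟩
        have hyz' : edist y z < ENNReal.ofReal ε := EMetric.mem_ball.1 hyz
        have htri : edist x z ≤ edist x y + edist y z := edist_triangle x y z
        have : edist x z < ENNReal.ofReal (2 * ε) + ENNReal.ofReal ε :=
          lt_of_le_of_lt htri (ENNReal.add_lt_add hxy hyz')
        rw [← ENNReal.ofReal_add (by linarith) hε0.le] at this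
        have h23 : 2 * ε + ε = 3 * ε := by ring
        rw [h23] at this
        exact EMetric.mem_ball.2 this
      have hball : ∀ z ∈ t, μH[α] (EMetric.ball z (ENNReal.ofReal (3 * ε))) ≠ ⊤ := by
        intro z _
        have hr0 : (0 : ℝ≥0∞) < ENNReal.ofReal (3 * ε) := ENNReal.ofReal_pos.2 (by linarith)
        have := (hreg z (ENNReal.ofReal (3 * ε)) hr0 ENNReal.ofReal_ne_top hε3).2
        refine ne_top_of_le_ne_top ?_ this
        exact ENNReal.mul_ne_top hCtop (ENNReal.rpow_ne_top_of_nonneg hα.le ENNReal.ofReal_ne_top)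
      have := measure_biUnion_lt_top (μ := μH[α]) htf
        (fun z hz => (hball z hz).lt_top)
      exact ne_top_of_le_ne_top this.ne (measure_mono hsub)
  -- Step 2: the measures of `cthickening r K'` tend to `μH[α] K'`.
  have hlim : Tendsto (fun r => μH[α] (Metric.cthickening r K')) (𝓝 0) (𝓝 (μH[α] K')) :=
    tendsto_measure_cthickening_of_isClosed hfin hK'.isClosed
  -- Step 3: for each ε > 0, limsup ≤ measure of the ε-thickening.
  have key : ∀ ε : ℝ, 0 < ε →
      limsup (fun n => μH[α] (K n)) atTop ≤ μH[α] (Metric.cthickening ε K') := by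
    intro ε hε
    have hev : ∀ᶠ n in atTop, EMetric.hausdorffEdist (K n) K' < ENNReal.ofReal ε :=
      hconv.eventually_lt_const (ENNReal.ofReal_pos.2 hε)
    refine limsup_le_of_le (by isBoundedDefault) ?_
    filter_upwards [hev] with n hn
    refine measure_mono fun x hx => ?_
    exact Metric.mem_cthickening_iff.2
      ((EMetric.infEdist_le_hausdorffEdist_of_mem hx).trans hn.le)
  -- Conclude by passing to the limit ε → 0⁺.
  have hlim' : Tendsto (fun r => μH[α] (Metric.cthickening r K')) (𝓝[>] (0 : ℝ))
      (𝓝 (μH[α] K')) := hlim.mono_left nhdsWithin_le_nhds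
  refine ge_of_tendsto hlim' ?_
  filter_upwards [self_mem_nhdsWithin] with r hr
  exact key r hr
end

section
/- Let (X,d) be an unbounded BPI space of dimension α and let 0 < s < 1. Then the snowflaked space (X, d^s) is an unbounded BPI space of dimension α/s. -/
open scoped ENNReal NNReal

/-- The distance function of an explicit metric structure. -/
def distOf {X : Type*} (m : MetricSpace X) : X → X → ℝ :=
  letI := m; fun x y => dist x y

/-- The `α`-dimensional Hausdorff measure (as a set function) of an explicit metric
structure, with respect to its Borel σ-algebra. -/
noncomputable def hMeas {X : Type*} (m : MetricSpace X) (α : ℝ) : Set X → ℝ≥0∞ :=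
  letI := m
  letI : MeasurableSpace X := borel X
  haveI : BorelSpace X := ⟨rfl⟩
  fun A => MeasureTheory.Measure.hausdorffMeasure α A

section Aux

variable {X : Type*} (m m' : MetricSpace X) {s α : ℝ}

noncomputable def emOf {X : Type*} (m : MetricSpace X) : EMetricSpace X := by
  letI := m; exact inferInstance

noncomputable def topOf {X : Type*} (m : MetricSpace X) : TopologicalSpace X := by
  letI := m; exact inferInstance

noncomputable def borelOf {X : Type*} (m : MetricSpace X) : MeasurableSpace X :=
  @borel X (topOf m)

lemma borelSpaceOf {X : Type*} (m : MetricSpace X) :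
    @BorelSpace X (topOf m) (borelOf m) := @BorelSpace.mk X (topOf m) (borelOf m) rfl

private lemma distOf_nonneg (x y : X) : 0 ≤ distOf m x y := by
  letI := m; exact dist_nonneg

private lemma edistOf_eq (x y : X) :
    (letI := m; (edist x y : ℝ≥0∞)) = ENNReal.ofReal (distOf m x y) := by
  letI := m; exact edist_dist x y

private lemma snow_edist (hs : 0 < s)
    (hd : ∀ x y : X, distOf m' x y = distOf m x y ^ s) (x y : X) :
    (letI := m'; (edist x y : ℝ≥0∞)) = (letI := m; (edist x y : ℝ≥0∞)) ^ s := by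
  rw [edistOf_eq m', edistOf_eq m, hd,
    ENNReal.ofReal_rpow_of_nonneg (distOf_nonneg m x y) hs.le]

private lemma holder_aux {E F : Type*} [EMetricSpace E] [EMetricSpace F]
    [MeasurableSpace E] [BorelSpace E] [MeasurableSpace F] [BorelSpace F]
    {s α : ℝ} (hs : 0 < s) (hα : 0 ≤ α) (f : E ≃ F)
    (hf : ∀ x y : E, edist (f x) (f y) = edist x y ^ s) (A : Set E) :
    MeasureTheory.Measure.hausdorffMeasure (α / s) (f '' A) =
      MeasureTheory.Measure.hausdorffMeasure α A := by
  have hαs : 0 ≤ α / s := div_nonneg hα hs.le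
  have h1s : (0:ℝ) < 1 / s := by positivity
  apply le_antisymm
  · have hH : HolderOnWith 1 ⟨s, hs.le⟩ f A := fun x _ y _ => by
      rw [hf]
      simp only [ENNReal.coe_one, one_mul, NNReal.coe_mk]
      exact le_rfl
    have h1 := hH.hausdorffMeasure_image_le (by exact_mod_cast hs) hαs
    rw [ENNReal.coe_one, ENNReal.one_rpow, one_mul] at h1
    convert h1 using 3
    show α = s * (α / s)
    field_simp
    rfl
  · have hg : ∀ u v : F, edist (f.symm u) (f.symm v) = edist u v ^ (1 / s) := by
      intro u v
      have h := hf (f.symm u) (f.symm v)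
      rw [f.apply_symm_apply, f.apply_symm_apply] at h
      rw [h, ← ENNReal.rpow_mul, mul_one_div, div_self hs.ne', ENNReal.rpow_one]
    have hH : HolderOnWith 1 ⟨1 / s, h1s.le⟩ f.symm (f '' A) := fun u _ v _ => by
      rw [hg]
      simp only [ENNReal.coe_one, one_mul, NNReal.coe_mk]
      exact le_rfl
    have h2 := hH.hausdorffMeasure_image_le (by exact_mod_cast h1s) hα
    rw [Equiv.symm_image_image, ENNReal.coe_one, ENNReal.one_rpow, one_mul] at h2
    convert h2 using 3
    show α / s = 1 / s * α
    ring
    rfl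

private lemma hMeas_snow (hs : 0 < s) (hα : 0 ≤ α)
    (hd : ∀ x y : X, distOf m' x y = distOf m x y ^ s) (A : Set X) :
    hMeas m' (α / s) A = hMeas m α A := by
  have key := @holder_aux X X
    (emOf m) (emOf m')
    (borelOf m) (borelSpaceOf m)
    (borelOf m') (borelSpaceOf m')
    s α hs hα (Equiv.refl X) (fun x y => snow_edist m m' hs hd x y) A
  simp only [Equiv.coe_refl, Set.image_id] at key
  exact key

private lemma mball_snow (hs : 0 < s)
    (hd : ∀ x y : X, distOf m' x y = distOf m x y ^ s) (x : X) {r : ℝ} (hr : 0 < r) :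
    (letI := m'; Metric.ball x (r ^ s)) = (letI := m; Metric.ball x r) := by
  ext y
  show distOf m' y x < r ^ s ↔ distOf m y x < r
  rw [hd]
  exact Real.rpow_lt_rpow_iff (distOf_nonneg m y x) hr.le hs

private lemma mball_snow' (hs : 0 < s)
    (hd : ∀ x y : X, distOf m' x y = distOf m x y ^ s) (x : X) {r : ℝ} (hr : 0 < r) :
    (letI := m'; Metric.ball x r) = (letI := m; Metric.ball x (r ^ s⁻¹)) := by
  have h1 : (0:ℝ) < r ^ s⁻¹ := Real.rpow_pos_of_pos hr _
  have h2 := mball_snow m m' hs hd x h1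
  rwa [Real.rpow_inv_rpow hr.le hs.ne'] at h2

private lemma eball_snow (hs : 0 < s)
    (hd : ∀ x y : X, distOf m' x y = distOf m x y ^ s) (x : X) (r : ℝ≥0∞) :
    (letI := m'; EMetric.ball x (r ^ s)) = (letI := m; EMetric.ball x r) := by
  ext y
  show (letI := m'; edist y x) < r ^ s ↔ (letI := m; edist y x) < r
  rw [snow_edist m m' hs hd]
  exact ENNReal.rpow_lt_rpow_iff hs

private lemma eball_snow' (hs : 0 < s)
    (hd : ∀ x y : X, distOf m' x y = distOf m x y ^ s) (x : X) (r : ℝ≥0∞) :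
    (letI := m'; EMetric.ball x r) = (letI := m; EMetric.ball x (r ^ s⁻¹)) := by
  have h2 := eball_snow m m' hs hd x (r ^ s⁻¹)
  rwa [← ENNReal.rpow_mul, inv_mul_cancel₀ hs.ne', ENNReal.rpow_one] at h2

private lemma closed_snow (hs : 0 < s)
    (hd : ∀ x y : X, distOf m' x y = distOf m x y ^ s) {A : Set X}
    (hA : letI := m; IsClosed A) : (letI := m'; IsClosed A) := by
  letI := m'
  rw [← isOpen_compl_iff, Metric.isOpen_iff]
  intro z hz
  have hAo : (letI := m; IsOpen Aᶜ) :=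
    (@isOpen_compl_iff X A
      (@UniformSpace.toTopologicalSpace X
        (@PseudoMetricSpace.toUniformSpace X m.toPseudoMetricSpace))).2 hA
  rw [@Metric.isOpen_iff X m.toPseudoMetricSpace] at hAo
  obtain ⟨ε, hε, hsub⟩ := hAo z hz
  exact ⟨ε ^ s, Real.rpow_pos_of_pos hε _,
    ((mball_snow m m' hs hd z hε).subset).trans hsub⟩

private lemma diam_top (hunb : ∀ R : ℝ, ∃ x y : X, R < distOf m x y) :
    (letI := m; EMetric.diam (Set.univ : Set X)) = ⊤ := by
  letI := m
  by_contra h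
  obtain ⟨x, y, hxy⟩ := hunb (EMetric.diam (Set.univ : Set X)).toReal
  have h1 : edist x y ≤ EMetric.diam (Set.univ : Set X) :=
    EMetric.edist_le_diam_of_mem trivial trivial
  have h2 : dist x y ≤ (EMetric.diam (Set.univ : Set X)).toReal := by
    rw [dist_edist]
    exact ENNReal.toReal_mono h h1
  exact absurd hxy (not_lt.2 h2)

private lemma complete_snow (hs : 0 < s)
    (hd : ∀ x y : X, distOf m' x y = distOf m x y ^ s)
    (hc : letI := m; CompleteSpace X) : (letI := m'; CompleteSpace X) := by
  letI := m'
  apply Metric.complete_of_cauchySeq_tendsto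
  intro u hu
  rw [Metric.cauchySeq_iff] at hu
  have hum : @CauchySeq X ℕ m.toUniformSpace _ u := by
    rw [@Metric.cauchySeq_iff X ℕ m.toPseudoMetricSpace _ _ u]
    intro ε hε
    obtain ⟨N, hN⟩ := hu (ε ^ s) (Real.rpow_pos_of_pos hε _)
    refine ⟨N, fun a ha b hb => ?_⟩
    have h1 : distOf m' (u a) (u b) < ε ^ s := hN a ha b hb
    rw [hd] at h1
    exact (Real.rpow_lt_rpow_iff (distOf_nonneg m _ _) hε.le hs).1 h1
  obtain ⟨x, hx⟩ := @cauchySeq_tendsto_of_complete X ℕ m.toUniformSpace _ hc u hum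
  rw [@Metric.tendsto_atTop X ℕ m.toPseudoMetricSpace _ _ u x] at hx
  refine ⟨x, Metric.tendsto_atTop.2 fun ε hε => ?_⟩
  obtain ⟨N, hN⟩ := hx (ε ^ s⁻¹) (Real.rpow_pos_of_pos hε _)
  refine ⟨N, fun n hn => ?_⟩
  have h1 : distOf m (u n) x < ε ^ s⁻¹ := hN n hn
  have h2 : distOf m' (u n) x < (ε ^ s⁻¹) ^ s := by
    rw [hd]
    exact Real.rpow_lt_rpow (distOf_nonneg m _ _) h1 hs
  rwa [Real.rpow_inv_rpow hε.le hs.ne'] at h2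

end Aux

/-- Ahlfors regularity of dimension `α` for a metric structure `m` on `X`. -/
def AhlforsWith {X : Type*} (m : MetricSpace X) (α : ℝ) : Prop :=
  letI := m
  CompleteSpace X ∧ ∃ K : ℝ≥0∞, 0 < K ∧ K ≠ ⊤ ∧
    ∀ (x : X) (r : ℝ≥0∞), 0 < r → r ≠ ⊤ → r ≤ EMetric.diam (Set.univ : Set X) →
      K⁻¹ * r ^ α ≤ hMeas m α (EMetric.ball x r) ∧ hMeas m α (EMetric.ball x r) ≤ K * r ^ α

/-- `(X, m)` is a BPI space of dimension `α`: it is Ahlfors `α`-regular and there are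
`C, θ > 0` such that any two balls `B(x,r)`, `B(y,t)` (radii at most the diameter)
contain a closed set `A ⊆ B(x,r)` with `H^α(A) ≥ θ·r^α` and a `C`-biLipschitz map
from `(A, r⁻¹d)` to `(B(y,t), t⁻¹d)`. -/
def IsBPIWith {X : Type*} (m : MetricSpace X) (α : ℝ) : Prop :=
  letI := m
  AhlforsWith m α ∧ ∃ C θ : ℝ, 0 < C ∧ 0 < θ ∧
    ∀ (x y : X) (r t : ℝ), 0 < r → 0 < t →
      ENNReal.ofReal r ≤ EMetric.diam (Set.univ : Set X) →
      ENNReal.ofReal t ≤ EMetric.diam (Set.univ : Set X) →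
      ∃ A : Set X, IsClosed A ∧ A ⊆ Metric.ball x r ∧
        ENNReal.ofReal (θ * r ^ α) ≤ hMeas m α A ∧
        ∃ f : X → X, (∀ a ∈ A, f a ∈ Metric.ball y t) ∧
          ∀ a ∈ A, ∀ b ∈ A,
            C⁻¹ * (t / r) * dist a b ≤ dist (f a) (f b) ∧
            dist (f a) (f b) ≤ C * (t / r) * dist a b

/-- If `(X, d)` is an unbounded BPI space of dimension `α` and `0 < s < 1`, then the
snowflaked space `(X, d^s)` is an unbounded BPI space of dimension `α/s`. -/
theorem snowflake_isBPI {X : Type*} (m m' : MetricSpace X) (α s : ℝ)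
    (hα : 0 < α) (hs : 0 < s) (hs1 : s < 1)
    (hd : ∀ x y : X, distOf m' x y = distOf m x y ^ s)
    (hBPI : IsBPIWith m α)
    (hunb : ∀ R : ℝ, ∃ x y : X, R < distOf m x y) :
    IsBPIWith m' (α / s) ∧ ∀ R : ℝ, ∃ x y : X, R < distOf m' x y := by
  obtain ⟨⟨hc, K, hK0, hKt, hK⟩, C, θ, hC, hθ, hB⟩ := hBPI
  have hdm : (letI := m; EMetric.diam (Set.univ : Set X)) = ⊤ := diam_top m hunb
  have hunb' : ∀ R : ℝ, ∃ x y : X, R < distOf m' x y := by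
    intro R
    obtain ⟨x, y, hxy⟩ := hunb ((max R 1) ^ s⁻¹)
    refine ⟨x, y, ?_⟩
    have h0 : (0:ℝ) < max R 1 := lt_max_of_lt_right one_pos
    have h2 : ((max R 1) ^ s⁻¹) ^ s < distOf m x y ^ s :=
      Real.rpow_lt_rpow (Real.rpow_pos_of_pos h0 _).le hxy hs
    rw [Real.rpow_inv_rpow h0.le hs.ne'] at h2
    rw [hd]
    exact lt_of_le_of_lt (le_max_left R 1) h2
  refine ⟨⟨⟨complete_snow m m' hs hd hc, K, hK0, hKt, fun x r hr0 hrt _ => ?_⟩,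
    C ^ s, θ, Real.rpow_pos_of_pos hC _, hθ, fun x y r t hr ht _ _ => ?_⟩, hunb'⟩
  · have hr1 : (0:ℝ≥0∞) < r ^ s⁻¹ := ENNReal.rpow_pos hr0 hrt
    have hrt1 : r ^ s⁻¹ ≠ ⊤ :=
      (ENNReal.rpow_lt_top_of_nonneg (by positivity) hrt).ne
    have hkey := hK x (r ^ s⁻¹) hr1 hrt1 (by rw [hdm]; exact le_top)
    have hball := eball_snow' m m' hs hd x r
    have hrs : (r ^ s⁻¹) ^ α = r ^ (α / s) := by
      rw [← ENNReal.rpow_mul, inv_mul_eq_div]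
    constructor
    · calc K⁻¹ * r ^ (α / s) = K⁻¹ * (r ^ s⁻¹) ^ α := by rw [hrs]
        _ ≤ hMeas m α (letI := m; EMetric.ball x (r ^ s⁻¹)) := hkey.1
        _ = hMeas m' (α / s) (letI := m'; EMetric.ball x r) := by
            rw [hMeas_snow m m' hs hα.le hd, hball]
    · calc hMeas m' (α / s) (letI := m'; EMetric.ball x r)
          = hMeas m α (letI := m; EMetric.ball x (r ^ s⁻¹)) := by
            rw [hMeas_snow m m' hs hα.le hd, hball]
        _ ≤ K * (r ^ s⁻¹) ^ α := hkey.2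
        _ = K * r ^ (α / s) := by rw [hrs]
  · have hrs : (0:ℝ) < r ^ s⁻¹ := Real.rpow_pos_of_pos hr _
    have hts : (0:ℝ) < t ^ s⁻¹ := Real.rpow_pos_of_pos ht _
    obtain ⟨A, hAc, hAb, hAm, f, hf1, hf2⟩ :=
      hB x y (r ^ s⁻¹) (t ^ s⁻¹) hrs hts (by rw [hdm]; exact le_top)
        (by rw [hdm]; exact le_top)
    refine ⟨A, closed_snow m m' hs hd hAc, ?_, ?_, f, ?_, ?_⟩
    · rw [mball_snow' m m' hs hd x hr]; exact hAb
    · rw [hMeas_snow m m' hs hα.le hd]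
      have he : θ * (r ^ s⁻¹) ^ α = θ * r ^ (α / s) := by
        rw [← Real.rpow_mul hr.le, inv_mul_eq_div]
      rw [← he]
      exact hAm
    · intro a ha
      rw [mball_snow' m m' hs hd y ht]
      exact hf1 a ha
    · intro a ha b hb
      obtain ⟨h1, h2⟩ := hf2 a ha b hb
      have hd0 := distOf_nonneg m a b
      have hq : (t ^ s⁻¹ / r ^ s⁻¹) ^ s = t / r := by
        rw [Real.div_rpow (Real.rpow_nonneg ht.le _) (Real.rpow_nonneg hr.le _),
          Real.rpow_inv_rpow ht.le hs.ne', Real.rpow_inv_rpow hr.le hs.ne']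
      constructor
      · show (C ^ s)⁻¹ * (t / r) * distOf m' a b ≤ distOf m' (f a) (f b)
        rw [hd a b, hd (f a) (f b)]
        calc (C ^ s)⁻¹ * (t / r) * distOf m a b ^ s
            = (C⁻¹ * (t ^ s⁻¹ / r ^ s⁻¹) * distOf m a b) ^ s := by
              rw [Real.mul_rpow (mul_nonneg (inv_nonneg.2 hC.le)
                  (div_nonneg hts.le hrs.le)) hd0,
                Real.mul_rpow (inv_nonneg.2 hC.le) (div_nonneg hts.le hrs.le),
                Real.inv_rpow hC.le, hq]
          _ ≤ distOf m (f a) (f b) ^ s :=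
              Real.rpow_le_rpow (mul_nonneg (mul_nonneg (inv_nonneg.2 hC.le)
                (div_nonneg hts.le hrs.le)) hd0) h1 hs.le
      · show distOf m' (f a) (f b) ≤ C ^ s * (t / r) * distOf m' a b
        rw [hd a b, hd (f a) (f b)]
        calc distOf m (f a) (f b) ^ s
            ≤ (C * (t ^ s⁻¹ / r ^ s⁻¹) * distOf m a b) ^ s :=
              Real.rpow_le_rpow (distOf_nonneg m _ _) h2 hs.le
          _ = C ^ s * (t / r) * distOf m a b ^ s := by
              rw [Real.mul_rpow (mul_nonneg hC.le (div_nonneg hts.le hrs.le)) hd0,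
                Real.mul_rpow hC.le (div_nonneg hts.le hrs.le), hq]
end

section
/- For any s_1, ..., s_N ∈ (0,1], the space ℝ^N with distance d_s(x,y) = Σ_{k=1}^N |x_k - y_k|^{s_k} is a BPI space of dimension α = Σ_{k=1}^N 1/s_k. -/
open scoped ENNReal

open MeasureTheory Set

section
variable {X : Type*}

theorem box_dist {N : ℕ} {s : Fin N → ℝ} [MetricSpace X] (φ : X ≃ (Fin N → ℝ))
    (hs0 : ∀ k, 0 < s k)
    (hd : ∀ x y : X, dist x y = ∑ k, |φ x k - φ y k| ^ s k)
    {a b : Fin N → ℝ}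
    {u v : X} (hu : φ u ∈ Set.Icc a b) (hv : φ v ∈ Set.Icc a b) :
    dist u v ≤ ∑ k, (b k - a k) ^ s k := by
  rw [hd]
  refine Finset.sum_le_sum fun k _ => ?_
  have hu1 := hu.1 k; have hu2 := hu.2 k; have hv1 := hv.1 k; have hv2 := hv.2 k
  have : |φ u k - φ v k| ≤ b k - a k := by
    rw [abs_sub_le_iff]; constructor <;> linarith
  exact Real.rpow_le_rpow (abs_nonneg _) this (hs0 k).le

theorem box_diam {N : ℕ} {s : Fin N → ℝ} [MetricSpace X] (φ : X ≃ (Fin N → ℝ))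
    (hs0 : ∀ k, 0 < s k)
    (hd : ∀ x y : X, dist x y = ∑ k, |φ x k - φ y k| ^ s k)
    {a b : Fin N → ℝ} :
    EMetric.diam (φ ⁻¹' Set.Icc a b) ≤ ENNReal.ofReal (∑ k, (b k - a k) ^ s k) := by
  refine EMetric.diam_le fun u hu v hv => ?_
  rw [edist_dist]
  exact ENNReal.ofReal_le_ofReal (box_dist φ hs0 hd hu hv)

/-- Any set is contained in a box whose sides are `diam ^ (s k)⁻¹`. -/
theorem subset_box {N : ℕ} {s : Fin N → ℝ} [MetricSpace X] (φ : X ≃ (Fin N → ℝ))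
    (hs0 : ∀ k, 0 < s k)
    (hd : ∀ x y : X, dist x y = ∑ k, |φ x k - φ y k| ^ s k)
    {S : Set X} (hS : (EMetric.diam S) ≠ ⊤) {x : X} (hx : x ∈ S) :
    S ⊆ φ ⁻¹' Set.Icc (fun k => φ x k - (EMetric.diam S).toReal ^ (s k)⁻¹)
        (fun k => φ x k + (EMetric.diam S).toReal ^ (s k)⁻¹) := by
  intro b hb
  set D := (EMetric.diam S).toReal with hDdef
  have hdist : dist b x ≤ D := by
    rw [dist_edist]
    exact ENNReal.toReal_mono hS (EMetric.edist_le_diam_of_mem hb hx)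
  simp only [Set.mem_preimage, Set.mem_Icc]
  have key : ∀ k, |φ b k - φ x k| ≤ D ^ (s k)⁻¹ := by
    intro k
    have h1 : |φ b k - φ x k| ^ s k ≤ dist b x := by
      rw [hd]
      exact Finset.single_le_sum (f := fun j => |φ b j - φ x j| ^ s j)
        (fun j _ => Real.rpow_nonneg (abs_nonneg _) _) (Finset.mem_univ k)
    have h2 : |φ b k - φ x k| = (|φ b k - φ x k| ^ s k) ^ (s k)⁻¹ :=
      (Real.rpow_rpow_inv (abs_nonneg _) (hs0 k).ne').symm
    rw [h2]
    exact Real.rpow_le_rpow (Real.rpow_nonneg (abs_nonneg _) _)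
      (h1.trans hdist) (inv_nonneg.2 (hs0 k).le)
  constructor <;> intro k <;>
    · have := key k; rw [abs_sub_le_iff] at this; linarith [this.1, this.2]

/-- The Lebesgue volume of (the coordinates of) a set is at most `2 ^ N` times
`diam ^ α` where `α = ∑ (s k)⁻¹`. -/
theorem vol_le_diam_rpow {N : ℕ} {s : Fin N → ℝ} [MetricSpace X] (φ : X ≃ (Fin N → ℝ))
    (hs0 : ∀ k, 0 < s k) (hα : 0 < ∑ k, (s k)⁻¹)
    (hd : ∀ x y : X, dist x y = ∑ k, |φ x k - φ y k| ^ s k)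
    (S : Set X) :
    volume (φ '' S) ≤ ENNReal.ofReal (2 ^ N) * (EMetric.diam S) ^ (∑ k, (s k)⁻¹) := by
  set α := ∑ k, (s k)⁻¹ with hαdef
  rcases S.eq_empty_or_nonempty with rfl | ⟨x, hx⟩
  · simp
  rcases eq_or_ne (EMetric.diam S) ⊤ with htop | hfin
  · rw [htop, ENNReal.top_rpow_of_pos hα, ENNReal.mul_top (by positivity)]
    exact le_top
  set D := (EMetric.diam S).toReal with hDdef
  have hD0 : 0 ≤ D := ENNReal.toReal_nonneg
  have hsub := subset_box φ hs0 hd hfin hx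
  have hvol : volume (φ '' S) ≤ ENNReal.ofReal (2 ^ N * D ^ α) := by
    refine le_trans (measure_mono (Set.image_subset_iff.2 hsub)) ?_
    · rw [Real.volume_Icc_pi]
      have : ∀ k : Fin N, ENNReal.ofReal
          ((φ x k + D ^ (s k)⁻¹) - (φ x k - D ^ (s k)⁻¹)) =
          ENNReal.ofReal (2 * D ^ (s k)⁻¹) := by
        intro k; congr 1; ring
      rw [Finset.prod_congr rfl fun k _ => this k,
        ← ENNReal.ofReal_prod_of_nonneg (fun k _ => by positivity)]
      refine ENNReal.ofReal_le_ofReal (le_of_eq ?_)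
      rw [Finset.prod_mul_distrib, Finset.prod_const, Finset.card_univ,
        Fintype.card_fin, ← Real.rpow_sum_of_nonneg hD0 (fun k _ => (inv_nonneg.2 (hs0 k).le))]
  refine hvol.trans (le_of_eq ?_)
  rcases eq_or_lt_of_le hD0 with hD | hD
  · have hdiam0 : EMetric.diam S = 0 := by
      rw [← ENNReal.ofReal_toReal hfin, ← hDdef, ← hD, ENNReal.ofReal_zero]
    rw [hdiam0, ENNReal.zero_rpow_of_pos hα, ← hD, Real.zero_rpow hα.ne', mul_zero,
      ENNReal.ofReal_zero, mul_zero]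
  · rw [ENNReal.ofReal_mul (by positivity), ← ENNReal.ofReal_rpow_of_pos hD,
      hDdef, ENNReal.ofReal_toReal hfin]

/-- Lower bound: Hausdorff measure dominates a multiple of Lebesgue volume. -/
theorem vol_le_hausdorff {N : ℕ} {s : Fin N → ℝ} [MetricSpace X]
    [MeasurableSpace X] [BorelSpace X] (φ : X ≃ (Fin N → ℝ))
    (hs0 : ∀ k, 0 < s k) (hα : 0 < ∑ k, (s k)⁻¹)
    (hd : ∀ x y : X, dist x y = ∑ k, |φ x k - φ y k| ^ s k)
    (S : Set X) :
    (ENNReal.ofReal (2 ^ N))⁻¹ * volume (φ '' S) ≤ μH[∑ k, (s k)⁻¹] S := by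
  set α := ∑ k, (s k)⁻¹ with hαdef
  set c : ℝ≥0∞ := ENNReal.ofReal (2 ^ N) with hcdef
  have hc0 : c ≠ 0 := by positivity
  have hctop : c ≠ ⊤ := ENNReal.ofReal_ne_top
  rw [Measure.hausdorffMeasure_apply]
  refine le_iSup_of_le 1 (le_iSup_of_le one_pos (le_iInf fun t => le_iInf fun hcov =>
    le_iInf fun _ => (ENNReal.inv_mul_le_iff hc0 hctop).2 ?_))
  calc volume (φ '' S) ≤ volume (⋃ n, φ '' (t n)) := by
        refine measure_mono ?_
        rw [← Set.image_iUnion]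
        exact Set.image_mono hcov
    _ ≤ ∑' n, volume (φ '' (t n)) := measure_iUnion_le _
    _ ≤ ∑' n, c * ⨆ _ : (t n).Nonempty, EMetric.diam (t n) ^ α := by
        refine ENNReal.tsum_le_tsum fun n => ?_
        rcases (t n).eq_empty_or_nonempty with he | hne
        · simp [he]
        · rw [iSup_pos hne]
          exact vol_le_diam_rpow φ hs0 hα hd (t n)
    _ = c * ∑' n, ⨆ _ : (t n).Nonempty, EMetric.diam (t n) ^ α := by
        rw [ENNReal.tsum_mul_left]

/-- Index type for a grid of boxes. -/
def BoxIdx {N : ℕ} (mI MI : Fin N → ℤ) : Type :=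
  ∀ k, ↥(Finset.Icc (mI k) (MI k))

noncomputable instance {N : ℕ} (mI MI : Fin N → ℤ) : Fintype (BoxIdx mI MI) :=
  inferInstanceAs (Fintype (∀ k, ↥(Finset.Icc (mI k) (MI k))))

theorem boxIdx_card {N : ℕ} (mI MI : Fin N → ℤ) :
    (Fintype.card (BoxIdx mI MI) : ℝ) = ∏ k, ((MI k + 1 - mI k).toNat : ℝ) := by
  rw [show Fintype.card (BoxIdx mI MI)
      = Fintype.card (∀ k, ↥(Finset.Icc (mI k) (MI k))) from rfl,
    Fintype.card_pi]
  push_cast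
  refine Finset.prod_congr rfl fun k _ => ?_
  rw [Fintype.card_coe, Int.card_Icc]

theorem haus_ball_le {N : ℕ} {s : Fin N → ℝ} [MetricSpace X]
    [MeasurableSpace X] [BorelSpace X] (φ : X ≃ (Fin N → ℝ))
    (hs0 : ∀ k, 0 < s k) (hα : 0 < ∑ k, (s k)⁻¹)
    (hd : ∀ x y : X, dist x y = ∑ k, |φ x k - φ y k| ^ s k)
    (x : X) (ρ : ℝ) (hρ : 0 < ρ) :
    μH[∑ k, (s k)⁻¹] (Metric.ball x ρ)
      ≤ ENNReal.ofReal (5 ^ N * (N : ℝ) ^ (∑ k, (s k)⁻¹) * ρ ^ (∑ k, (s k)⁻¹)) := by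
  classical
  set α := ∑ k, (s k)⁻¹ with hαdef
  set δk : ℕ → Fin N → ℝ := fun n k => (ρ / n) ^ (s k)⁻¹ with hδk
  set lo : Fin N → ℝ := fun k => φ x k - ρ ^ (s k)⁻¹ with hlo
  set hi : Fin N → ℝ := fun k => φ x k + ρ ^ (s k)⁻¹ with hhi
  set mI : ℕ → Fin N → ℤ := fun n k => ⌊lo k / δk n k⌋ - 1 with hmI
  set MI : ℕ → Fin N → ℤ := fun n k => ⌊hi k / δk n k⌋ with hMI
  set t : ∀ n : ℕ, BoxIdx (mI n) (MI n) → Set X := fun n j =>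
    φ ⁻¹' Set.Icc (fun k => ((j k : ℤ) : ℝ) * δk n k)
      (fun k => ((j k : ℤ) : ℝ) * δk n k + δk n k) with ht_def
  have hδpos : ∀ n : ℕ, 1 ≤ n → 0 < ρ / n := fun n hn =>
    div_pos hρ (by exact_mod_cast hn)
  have hδkpos : ∀ n : ℕ, 1 ≤ n → ∀ k, 0 < δk n k := fun n hn k =>
    Real.rpow_pos_of_pos (hδpos n hn) _
  -- diameters
  have ht : ∀ᶠ n in Filter.atTop, ∀ j, EMetric.diam (t n j)
      ≤ ENNReal.ofReal ((N : ℝ) * (ρ / n)) := by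
    filter_upwards [Filter.eventually_ge_atTop 1] with n hn j
    refine le_trans (box_diam φ hs0 hd) (ENNReal.ofReal_le_ofReal ?_)
    have : ∀ k : Fin N, (((j k : ℤ) : ℝ) * δk n k + δk n k - ((j k : ℤ) : ℝ) * δk n k) ^ s k
        = ρ / n := by
      intro k
      rw [add_sub_cancel_left]
      exact Real.rpow_inv_rpow (hδpos n hn).le (hs0 k).ne'
    rw [Finset.sum_congr rfl fun k _ => this k, Finset.sum_const, Finset.card_univ,
      Fintype.card_fin, nsmul_eq_mul]
  -- cover
  have hst : ∀ᶠ n in Filter.atTop, Metric.ball x ρ ⊆ ⋃ j, t n j := by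
    filter_upwards [Filter.eventually_ge_atTop 1] with n hn z hz
    have hcoord : ∀ k, lo k ≤ φ z k ∧ φ z k ≤ hi k := by
      intro k
      have h1 : |φ z k - φ x k| ^ s k ≤ dist z x := by
        rw [hd]
        exact Finset.single_le_sum (f := fun j => |φ z j - φ x j| ^ s j)
          (fun j _ => Real.rpow_nonneg (abs_nonneg _) _) (Finset.mem_univ k)
      have h2 : |φ z k - φ x k| ≤ ρ ^ (s k)⁻¹ := by
        have := (Real.rpow_rpow_inv (abs_nonneg (φ z k - φ x k)) (hs0 k).ne').symm
        rw [this]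
        exact Real.rpow_le_rpow (Real.rpow_nonneg (abs_nonneg _) _)
          (h1.trans (le_of_lt hz)) (inv_nonneg.2 (hs0 k).le)
      rw [abs_sub_le_iff] at h2
      constructor <;> simp only [hlo, hhi] <;> linarith [h2.1, h2.2]
    refine Set.mem_iUnion.2 ⟨fun k => ⟨⌊φ z k / δk n k⌋, ?_⟩, ?_⟩
    · rw [Finset.mem_Icc]
      have hfl : ⌊lo k / δk n k⌋ ≤ ⌊φ z k / δk n k⌋ :=
        Int.floor_le_floor (div_le_div_of_nonneg_right (hcoord k).1 (hδkpos n hn k).le)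
      have hfu : ⌊φ z k / δk n k⌋ ≤ ⌊hi k / δk n k⌋ :=
        Int.floor_le_floor (div_le_div_of_nonneg_right (hcoord k).2 (hδkpos n hn k).le)
      simp only [hmI, hMI]
      omega
    · simp only [ht_def, Set.mem_preimage, Set.mem_Icc]
      constructor <;> intro k
      · have h1 : (⌊φ z k / δk n k⌋ : ℝ) ≤ φ z k / δk n k := Int.floor_le _
        have h2 := hδkpos n hn k
        calc (⌊φ z k / δk n k⌋ : ℝ) * δk n k ≤ (φ z k / δk n k) * δk n k :=
            mul_le_mul_of_nonneg_right h1 h2.le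
          _ = φ z k := div_mul_cancel₀ _ h2.ne'
      · have h1 : φ z k / δk n k < ⌊φ z k / δk n k⌋ + 1 := Int.lt_floor_add_one _
        have h2 := hδkpos n hn k
        have h3 := mul_le_mul_of_nonneg_right h1.le h2.le
        rw [div_mul_cancel₀ _ h2.ne'] at h3
        nlinarith
  -- conclude
  have hN : 0 < N := by
    rcases Nat.eq_zero_or_pos N with h | h
    · subst h; simp [hαdef] at hα
    · exact h
  have hr : Filter.Tendsto (fun n : ℕ => ENNReal.ofReal ((N : ℝ) * (ρ / n)))
      Filter.atTop (nhds 0) := by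
    have h0 : Filter.Tendsto (fun n : ℕ => (N : ℝ) * ρ / n) Filter.atTop (nhds 0) :=
      tendsto_const_div_atTop_nhds_zero_nat _
    have h1 : Filter.Tendsto (fun n : ℕ => (N : ℝ) * (ρ / n)) Filter.atTop (nhds 0) := by
      simpa [mul_div_assoc] using h0
    have := ENNReal.tendsto_ofReal h1
    simpa using this
  refine le_trans
    (MeasureTheory.Measure.hausdorffMeasure_le_liminf_sum α (Metric.ball x ρ) _ hr t ht hst) ?_
  refine le_trans (Filter.liminf_le_limsup (by isBoundedDefault) (by isBoundedDefault))
    (Filter.limsup_le_of_le (by isBoundedDefault) ?_)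
  filter_upwards [Filter.eventually_ge_atTop 1] with n hn
  have hn0 : (0:ℝ) < (n:ℝ) := by exact_mod_cast hn
  have hδn := hδpos n hn
  -- bound each diameter term
  have hterm : ∀ j : BoxIdx (mI n) (MI n), EMetric.diam (t n j) ^ α
      ≤ ENNReal.ofReal (((N : ℝ) * (ρ / n)) ^ α) := by
    intro j
    have h1 : EMetric.diam (t n j) ≤ ENNReal.ofReal ((N : ℝ) * (ρ / n)) := by
      refine le_trans (box_diam φ hs0 hd) (ENNReal.ofReal_le_ofReal ?_)
      have : ∀ k : Fin N,
          (((j k : ℤ) : ℝ) * δk n k + δk n k - ((j k : ℤ) : ℝ) * δk n k) ^ s k = ρ / n := by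
        intro k
        rw [add_sub_cancel_left]
        exact Real.rpow_inv_rpow hδn.le (hs0 k).ne'
      rw [Finset.sum_congr rfl fun k _ => this k, Finset.sum_const, Finset.card_univ,
        Fintype.card_fin, nsmul_eq_mul]
    calc EMetric.diam (t n j) ^ α ≤ (ENNReal.ofReal ((N : ℝ) * (ρ / n))) ^ α :=
        ENNReal.rpow_le_rpow h1 hα.le
      _ = ENNReal.ofReal (((N : ℝ) * (ρ / n)) ^ α) :=
        ENNReal.ofReal_rpow_of_pos (by positivity)
  -- count the boxes
  have hcard : (Fintype.card (BoxIdx (mI n) (MI n)) : ℝ) ≤ 5 ^ N * (n : ℝ) ^ α := by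
    rw [boxIdx_card]
    have hfac : ∀ k : Fin N, ((MI n k + 1 - mI n k).toNat : ℝ) ≤ 5 * (n : ℝ) ^ (s k)⁻¹ := by
      intro k
      have hδkp := hδkpos n hn k
      have hlohi : lo k ≤ hi k := by
        simp only [hlo, hhi]
        have : (0:ℝ) ≤ ρ ^ (s k)⁻¹ := Real.rpow_nonneg hρ.le _
        linarith
      have hmle : mI n k ≤ MI n k + 1 := by
        have : ⌊lo k / δk n k⌋ ≤ ⌊hi k / δk n k⌋ :=
          Int.floor_le_floor (div_le_div_of_nonneg_right hlohi hδkp.le)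
        simp only [hmI, hMI]
        omega
      have hcast : ((MI n k + 1 - mI n k).toNat : ℝ) = (MI n k : ℝ) + 1 - (mI n k : ℝ) := by
        rw [← Int.cast_natCast, Int.toNat_of_nonneg (by omega)]
        push_cast
        ring
      rw [hcast]
      have h1 : (⌊hi k / δk n k⌋ : ℝ) ≤ hi k / δk n k := Int.floor_le _
      have h2 : lo k / δk n k - 1 < (⌊lo k / δk n k⌋ : ℝ) := Int.sub_one_lt_floor _
      have hratio : (hi k - lo k) / δk n k = 2 * (n : ℝ) ^ (s k)⁻¹ := by
        have hhl : hi k - lo k = 2 * ρ ^ (s k)⁻¹ := by simp only [hlo, hhi]; ring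
        rw [hhl, hδk]
        rw [mul_div_assoc, ← Real.div_rpow hρ.le hδn.le]
        congr 2
        field_simp
      have hone : (1:ℝ) ≤ (n : ℝ) ^ (s k)⁻¹ :=
        Real.one_le_rpow (by exact_mod_cast hn) (inv_nonneg.2 (hs0 k).le)
      have hdivle : hi k / δk n k - lo k / δk n k = (hi k - lo k) / δk n k := by ring
      simp only [hmI, hMI]
      push_cast
      nlinarith [h1, h2, hratio, hone, hdivle]
    calc (∏ k, ((MI n k + 1 - mI n k).toNat : ℝ))
        ≤ ∏ k, (5 * (n : ℝ) ^ (s k)⁻¹) :=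
          Finset.prod_le_prod (fun k _ => by positivity) (fun k _ => hfac k)
      _ = 5 ^ N * (n : ℝ) ^ α := by
          rw [Finset.prod_mul_distrib, Finset.prod_const, Finset.card_univ, Fintype.card_fin,
            ← Real.rpow_sum_of_nonneg hn0.le (fun k _ => inv_nonneg.2 (hs0 k).le), hαdef]
  -- put it together
  have e1 : ((N : ℝ) * (ρ / n)) ^ α = (N : ℝ) ^ α * (ρ / n) ^ α :=
    Real.mul_rpow (Nat.cast_nonneg N) (by positivity)
  have e2 : (n : ℝ) ^ α * (ρ / n) ^ α = ρ ^ α := by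
    rw [← Real.mul_rpow hn0.le (by positivity), mul_div_cancel₀ _ hn0.ne']
  calc ∑ j : BoxIdx (mI n) (MI n), EMetric.diam (t n j) ^ α
      ≤ ∑ _j : BoxIdx (mI n) (MI n), ENNReal.ofReal (((N : ℝ) * (ρ / n)) ^ α) :=
        Finset.sum_le_sum fun j _ => hterm j
    _ = (Fintype.card (BoxIdx (mI n) (MI n)) : ℝ≥0∞)
          * ENNReal.ofReal (((N : ℝ) * (ρ / n)) ^ α) := by
        rw [Finset.sum_const, Finset.card_univ, nsmul_eq_mul]
    _ = ENNReal.ofReal ((Fintype.card (BoxIdx (mI n) (MI n)) : ℝ)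
          * ((N : ℝ) * (ρ / n)) ^ α) := by
        rw [ENNReal.ofReal_mul (Nat.cast_nonneg _), ENNReal.ofReal_natCast]
    _ ≤ ENNReal.ofReal (5 ^ N * (N : ℝ) ^ α * ρ ^ α) := by
        refine ENNReal.ofReal_le_ofReal ?_
        calc (Fintype.card (BoxIdx (mI n) (MI n)) : ℝ) * ((N : ℝ) * (ρ / n)) ^ α
            ≤ (5 ^ N * (n : ℝ) ^ α) * ((N : ℝ) ^ α * (ρ / n) ^ α) := by
              rw [e1]
              exact mul_le_mul_of_nonneg_right hcard (by positivity)
          _ = 5 ^ N * (N : ℝ) ^ α * ((n : ℝ) ^ α * (ρ / n) ^ α) := by ring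
          _ = 5 ^ N * (N : ℝ) ^ α * ρ ^ α := by rw [e2]

theorem snow_complete {N : ℕ} {s : Fin N → ℝ} [MetricSpace X] (φ : X ≃ (Fin N → ℝ))
    (hN : 0 < N) (hs0 : ∀ k, 0 < s k)
    (hd : ∀ x y : X, dist x y = ∑ k, |φ x k - φ y k| ^ s k) :
    CompleteSpace X := by
  refine Metric.complete_of_cauchySeq_tendsto fun u hu => ?_
  have hcoord : ∀ k, CauchySeq fun n => φ (u n) k := by
    intro k
    rw [Metric.cauchySeq_iff]
    intro ε hε
    obtain ⟨n₀, hn₀⟩ := (Metric.cauchySeq_iff.1 hu) (ε ^ s k) (Real.rpow_pos_of_pos hε _)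
    refine ⟨n₀, fun p hp q hq => ?_⟩
    have h1 : |φ (u p) k - φ (u q) k| ^ s k ≤ dist (u p) (u q) := by
      rw [hd]
      exact Finset.single_le_sum (f := fun j => |φ (u p) j - φ (u q) j| ^ s j)
        (fun j _ => Real.rpow_nonneg (abs_nonneg _) _) (Finset.mem_univ k)
    have h2 : |φ (u p) k - φ (u q) k| ^ s k < ε ^ s k := lt_of_le_of_lt h1 (hn₀ p hp q hq)
    rw [Real.dist_eq]
    by_contra hcon
    push_neg at hcon
    exact absurd h2 (not_lt.2 (Real.rpow_le_rpow hε.le hcon (hs0 k).le))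
  choose L hL using fun k => cauchySeq_tendsto_of_complete (hcoord k)
  refine ⟨φ.symm L, Metric.tendsto_atTop.2 fun ε hε => ?_⟩
  set ε' := ε / (N + 1) with hε'
  have hε'pos : 0 < ε' := by positivity
  have hev : ∀ᶠ n in Filter.atTop, ∀ k, |φ (u n) k - L k| < ε' ^ (s k)⁻¹ := by
    rw [Filter.eventually_all]
    intro k
    have := (Metric.tendsto_atTop.1 (hL k)) (ε' ^ (s k)⁻¹) (Real.rpow_pos_of_pos hε'pos _)
    rw [Filter.eventually_atTop]
    obtain ⟨n₀, hn₀⟩ := this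
    exact ⟨n₀, fun n hn => by simpa [Real.dist_eq] using hn₀ n hn⟩
  obtain ⟨n₀, hn₀⟩ := Filter.eventually_atTop.1 hev
  refine ⟨n₀, fun n hn => ?_⟩
  have hsum : dist (u n) (φ.symm L) = ∑ k, |φ (u n) k - L k| ^ s k := by
    rw [hd]
    simp [Equiv.apply_symm_apply]
  rw [hsum]
  have hlt : ∀ k : Fin N, |φ (u n) k - L k| ^ s k < ε' := by
    intro k
    have := Real.rpow_lt_rpow (abs_nonneg _) (hn₀ n hn k) (hs0 k)
    rwa [Real.rpow_inv_rpow hε'pos.le (hs0 k).ne'] at this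
  calc ∑ k, |φ (u n) k - L k| ^ s k < ∑ _k : Fin N, ε' :=
      Finset.sum_lt_sum_of_nonempty (Finset.univ_nonempty_iff.2 ⟨⟨0, hN⟩⟩)
        (fun k _ => hlt k)
    _ = N * ε' := by rw [Finset.sum_const, Finset.card_univ, Fintype.card_fin, nsmul_eq_mul]
    _ < ε := by
      have hNpos : (0:ℝ) < N := by exact_mod_cast hN
      rw [hε', mul_div_assoc']
      rw [div_lt_iff₀ (by positivity)]
      nlinarith

theorem haus_ball_ge {N : ℕ} {s : Fin N → ℝ} [MetricSpace X]
    [MeasurableSpace X] [BorelSpace X] (φ : X ≃ (Fin N → ℝ))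
    (hN : 0 < N) (hs0 : ∀ k, 0 < s k) (hα : 0 < ∑ k, (s k)⁻¹)
    (hd : ∀ x y : X, dist x y = ∑ k, |φ x k - φ y k| ^ s k)
    (x : X) (ρ : ℝ) (hρ : 0 < ρ) :
    (ENNReal.ofReal (2 ^ N))⁻¹ * ENNReal.ofReal ((ρ / (2 * N)) ^ (∑ k, (s k)⁻¹))
      ≤ μH[∑ k, (s k)⁻¹] (Metric.ball x ρ) := by
  set α := ∑ k, (s k)⁻¹ with hαdef
  have hη : 0 < ρ / (2 * N) := by positivity
  set b : Fin N → ℝ := fun k => φ x k + (ρ / (2 * N)) ^ (s k)⁻¹ with hb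
  have hsub : φ ⁻¹' Set.Icc (φ x) b ⊆ Metric.ball x ρ := by
    intro z hz
    rw [Metric.mem_ball]
    have hxmem : φ x ∈ Set.Icc (φ x) b := by
      refine Set.mem_Icc.2 ⟨le_refl _, fun k => ?_⟩
      have : (0:ℝ) ≤ (ρ / (2 * N)) ^ (s k)⁻¹ := Real.rpow_nonneg hη.le _
      simp only [hb]
      linarith
    have hdz := box_dist φ hs0 hd hz hxmem
    have hval : ∀ k : Fin N, (b k - φ x k) ^ s k = ρ / (2 * N) := by
      intro k
      simp only [hb, add_sub_cancel_left]
      exact Real.rpow_inv_rpow hη.le (hs0 k).ne'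
    rw [Finset.sum_congr rfl fun k _ => hval k, Finset.sum_const, Finset.card_univ,
      Fintype.card_fin, nsmul_eq_mul] at hdz
    calc dist z x ≤ N * (ρ / (2 * N)) := hdz
      _ = ρ / 2 := by field_simp
      _ < ρ := by linarith
  have hv : volume (φ '' (φ ⁻¹' Set.Icc (φ x) b)) = ENNReal.ofReal ((ρ / (2 * N)) ^ α) := by
    rw [Set.image_preimage_eq _ φ.surjective, Real.volume_Icc_pi]
    have : ∀ k : Fin N, ENNReal.ofReal (b k - φ x k)
        = ENNReal.ofReal ((ρ / (2 * N)) ^ (s k)⁻¹) := by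
      intro k; simp only [hb]; congr 1; ring
    rw [Finset.prod_congr rfl fun k _ => this k,
      ← ENNReal.ofReal_prod_of_nonneg (fun k _ => Real.rpow_nonneg hη.le _),
      ← Real.rpow_sum_of_nonneg hη.le (fun k _ => inv_nonneg.2 (hs0 k).le)]
  calc (ENNReal.ofReal (2 ^ N))⁻¹ * ENNReal.ofReal ((ρ / (2 * N)) ^ α)
      = (ENNReal.ofReal (2 ^ N))⁻¹ * volume (φ '' (φ ⁻¹' Set.Icc (φ x) b)) := by rw [hv]
    _ ≤ μH[α] (φ ⁻¹' Set.Icc (φ x) b) := vol_le_hausdorff φ hs0 hα hd _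
    _ ≤ μH[α] (Metric.ball x ρ) := measure_mono hsub

theorem ahlfors_bounds {N : ℕ} {s : Fin N → ℝ} [MetricSpace X]
    [MeasurableSpace X] [BorelSpace X] (φ : X ≃ (Fin N → ℝ))
    (hN : 0 < N) (hs0 : ∀ k, 0 < s k) (hα : 0 < ∑ k, (s k)⁻¹)
    (hd : ∀ x y : X, dist x y = ∑ k, |φ x k - φ y k| ^ s k)
    (x : X) (r : ℝ≥0∞) (hr0 : 0 < r) (hrt : r ≠ ⊤) :
    (ENNReal.ofReal (max (2 ^ N * (2 * (N:ℝ)) ^ (∑ k, (s k)⁻¹))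
        (5 ^ N * (N:ℝ) ^ (∑ k, (s k)⁻¹))))⁻¹ * r ^ (∑ k, (s k)⁻¹)
      ≤ μH[∑ k, (s k)⁻¹] (EMetric.ball x r) ∧
    μH[∑ k, (s k)⁻¹] (EMetric.ball x r)
      ≤ ENNReal.ofReal (max (2 ^ N * (2 * (N:ℝ)) ^ (∑ k, (s k)⁻¹))
        (5 ^ N * (N:ℝ) ^ (∑ k, (s k)⁻¹))) * r ^ (∑ k, (s k)⁻¹) := by
  set α := ∑ k, (s k)⁻¹ with hαdef
  have hNR : (0:ℝ) < N := by exact_mod_cast hN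
  set r' := r.toReal with hr'def
  have hr' : 0 < r' := ENNReal.toReal_pos hr0.ne' hrt
  have hball : EMetric.ball x r = Metric.ball x r' := by
    conv_lhs => rw [← ENNReal.ofReal_toReal hrt]
    exact Metric.emetric_ball
  have hrpow : r ^ α = ENNReal.ofReal (r' ^ α) := by
    conv_lhs => rw [← ENNReal.ofReal_toReal hrt]
    exact ENNReal.ofReal_rpow_of_pos hr'
  set K := ENNReal.ofReal (max (2 ^ N * (2 * (N:ℝ)) ^ α) (5 ^ N * (N:ℝ) ^ α)) with hK
  have hK1 : ENNReal.ofReal (2 ^ N * (2 * (N:ℝ)) ^ α) ≤ K :=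
    ENNReal.ofReal_le_ofReal (le_max_left _ _)
  have hK2 : ENNReal.ofReal (5 ^ N * (N:ℝ) ^ α) ≤ K :=
    ENNReal.ofReal_le_ofReal (le_max_right _ _)
  have hK0 : K ≠ 0 := by
    rw [hK]
    simp only [ne_eq, ENNReal.ofReal_eq_zero, not_le]
    have : (0:ℝ) < 2 ^ N * (2 * (N:ℝ)) ^ α := by positivity
    exact lt_max_of_lt_left this
  constructor
  · rw [hball, hrpow]
    refine le_trans ?_ (haus_ball_ge φ hN hs0 hα hd x r' hr')
    have e : (ENNReal.ofReal (2 ^ N))⁻¹ * ENNReal.ofReal ((r' / (2 * N)) ^ α)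
        = ENNReal.ofReal (r' ^ α) * (ENNReal.ofReal (2 ^ N * (2 * (N:ℝ)) ^ α))⁻¹ := by
      rw [Real.div_rpow hr'.le (by positivity),
        ENNReal.ofReal_div_of_pos (by positivity),
        ENNReal.ofReal_mul (by positivity : (0:ℝ) ≤ 2 ^ N),
        ENNReal.mul_inv (Or.inl (by positivity)) (Or.inl ENNReal.ofReal_ne_top),
        ENNReal.div_eq_inv_mul]
      ring
    rw [e]
    calc K⁻¹ * ENNReal.ofReal (r' ^ α)
        ≤ (ENNReal.ofReal (2 ^ N * (2 * (N:ℝ)) ^ α))⁻¹ * ENNReal.ofReal (r' ^ α) :=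
          mul_le_mul_left (ENNReal.inv_le_inv.2 hK1) _
      _ = ENNReal.ofReal (r' ^ α) * (ENNReal.ofReal (2 ^ N * (2 * (N:ℝ)) ^ α))⁻¹ :=
          mul_comm _ _
  · rw [hball, hrpow]
    refine le_trans (haus_ball_le φ hs0 hα hd x r' hr') ?_
    rw [ENNReal.ofReal_mul (by positivity : (0:ℝ) ≤ 5 ^ N * (N:ℝ) ^ α)]
    exact mul_le_mul_left hK2 _

theorem bpi_data {N : ℕ} {s : Fin N → ℝ} [MetricSpace X]
    [MeasurableSpace X] [BorelSpace X] (φ : X ≃ (Fin N → ℝ))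
    (hN : 0 < N) (hs0 : ∀ k, 0 < s k) (hα : 0 < ∑ k, (s k)⁻¹)
    (hd : ∀ x y : X, dist x y = ∑ k, |φ x k - φ y k| ^ s k)
    (x y : X) (r t : ℝ) (hr : 0 < r) (ht : 0 < t) :
    ∃ A : Set X, IsClosed A ∧ A ⊆ Metric.ball x r ∧
      ENNReal.ofReal ((2 ^ N * (4 * (N:ℝ)) ^ (∑ k, (s k)⁻¹))⁻¹ * r ^ (∑ k, (s k)⁻¹))
        ≤ μH[∑ k, (s k)⁻¹] A ∧
      ∃ f : X → X, (∀ a ∈ A, f a ∈ Metric.ball y t) ∧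
        ∀ a ∈ A, ∀ b ∈ A,
          (1:ℝ)⁻¹ * (t / r) * dist a b ≤ dist (f a) (f b) ∧
          dist (f a) (f b) ≤ 1 * (t / r) * dist a b := by
  set α := ∑ k, (s k)⁻¹ with hαdef
  have hNR : (0:ℝ) < N := by exact_mod_cast hN
  have htr : 0 < t / r := div_pos ht hr
  refine ⟨Metric.closedBall x (r / 2), Metric.isClosed_closedBall,
    Metric.closedBall_subset_ball (by linarith), ?_, ?_⟩
  · -- measure lower bound
    have h1 := haus_ball_ge φ hN hs0 hα hd x (r / 2) (by linarith)
    have h2 : μH[α] (Metric.ball x (r / 2)) ≤ μH[α] (Metric.closedBall x (r / 2)) :=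
      measure_mono Metric.ball_subset_closedBall
    refine le_trans (le_of_eq ?_) (le_trans h1 h2)
    have e0 : r / 2 / (2 * (N:ℝ)) = r / (4 * N) := by
      rw [div_div]
      congr 1
      ring
    rw [e0, Real.div_rpow hr.le (by positivity), ENNReal.ofReal_mul (by positivity),
      ENNReal.ofReal_div_of_pos (by positivity),
      ENNReal.ofReal_inv_of_pos (by positivity),
      ENNReal.ofReal_mul (by positivity : (0:ℝ) ≤ 2 ^ N),
      ENNReal.mul_inv (Or.inl (by positivity)) (Or.inl ENNReal.ofReal_ne_top),
      ENNReal.div_eq_inv_mul]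
    ring
  · -- the scaling map
    refine ⟨fun z => φ.symm fun k => φ y k + (t / r) ^ (s k)⁻¹ * (φ z k - φ x k), ?_, ?_⟩
    · intro a ha
      have hab : dist (φ.symm fun k => φ y k + (t / r) ^ (s k)⁻¹ * (φ a k - φ x k)) y
          = (t / r) * dist a x := by
        rw [hd, hd a x]
        rw [Finset.mul_sum]
        refine Finset.sum_congr rfl fun k _ => ?_
        rw [Equiv.apply_symm_apply]
        have : φ y k + (t / r) ^ (s k)⁻¹ * (φ a k - φ x k) - φ y k
            = (t / r) ^ (s k)⁻¹ * (φ a k - φ x k) := by ring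
        rw [this, abs_mul, abs_of_pos (Real.rpow_pos_of_pos htr _),
          Real.mul_rpow (Real.rpow_nonneg htr.le _) (abs_nonneg _),
          Real.rpow_inv_rpow htr.le (hs0 k).ne']
      rw [Metric.mem_ball, hab]
      have hax : dist a x ≤ r / 2 := Metric.mem_closedBall.1 ha
      calc (t / r) * dist a x ≤ (t / r) * (r / 2) :=
          mul_le_mul_of_nonneg_left hax htr.le
        _ = t / 2 := by field_simp
        _ < t := by linarith
    · intro a _ b _
      have hab : dist (φ.symm fun k => φ y k + (t / r) ^ (s k)⁻¹ * (φ a k - φ x k))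
          (φ.symm fun k => φ y k + (t / r) ^ (s k)⁻¹ * (φ b k - φ x k))
          = (t / r) * dist a b := by
        rw [hd, hd a b, Finset.mul_sum]
        refine Finset.sum_congr rfl fun k _ => ?_
        simp only [Equiv.apply_symm_apply]
        have : φ y k + (t / r) ^ (s k)⁻¹ * (φ a k - φ x k)
            - (φ y k + (t / r) ^ (s k)⁻¹ * (φ b k - φ x k))
            = (t / r) ^ (s k)⁻¹ * (φ a k - φ b k) := by ring
        rw [this, abs_mul, abs_of_pos (Real.rpow_pos_of_pos htr _),
          Real.mul_rpow (Real.rpow_nonneg htr.le _) (abs_nonneg _),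
          Real.rpow_inv_rpow htr.le (hs0 k).ne']
      rw [hab]
      constructor
      · rw [inv_one, one_mul]
      · rw [one_mul]

end

noncomputable def mBorel {X : Type*} (m : MetricSpace X) : MeasurableSpace X :=
  letI := m; borel X

theorem mBorel_borelSpace {X : Type*} (m : MetricSpace X) :
    letI := m; letI := mBorel m; BorelSpace X := by
  letI := m; letI : MeasurableSpace X := mBorel m
  exact ⟨rfl⟩

/-- For any `s₁, …, s_N ∈ (0,1]`, the space `ℝ^N` with the distance
`d_s(x,y) = Σₖ |xₖ - yₖ|^{sₖ}` is a BPI space of dimension `α = Σₖ 1/sₖ`. -/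
theorem product_snowflakes_isBPI (N : ℕ) (hN : 1 ≤ N) (s : Fin N → ℝ)
    (hs0 : ∀ k, 0 < s k) (hs1 : ∀ k, s k ≤ 1)
    (m : MetricSpace (Fin N → ℝ))
    (hd : ∀ x y : Fin N → ℝ, distOf m x y = ∑ k, |x k - y k| ^ s k) :
    IsBPIWith m (∑ k, (s k)⁻¹) := by
  have hN0 : 0 < N := hN
  have hNR : (0:ℝ) < N := by exact_mod_cast hN0
  have hα : 0 < ∑ k, (s k)⁻¹ :=
    Finset.sum_pos (fun k _ => inv_pos.2 (hs0 k)) (Finset.univ_nonempty_iff.2 ⟨⟨0, hN0⟩⟩)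
  refine ⟨⟨?_, ?_⟩, ?_⟩
  · exact @snow_complete (Fin N → ℝ) N s m (Equiv.refl _) hN0 hs0 hd
  · refine ⟨ENNReal.ofReal (max (2 ^ N * (2 * (N:ℝ)) ^ (∑ k, (s k)⁻¹))
      (5 ^ N * (N:ℝ) ^ (∑ k, (s k)⁻¹))), ?_, ENNReal.ofReal_ne_top, ?_⟩
    · rw [ENNReal.ofReal_pos]
      exact lt_max_of_lt_left
        (mul_pos (pow_pos two_pos N) (Real.rpow_pos_of_pos (by linarith) _))
    · intro x r hr0 hrt _
      exact @ahlfors_bounds (Fin N → ℝ) N s m (mBorel m) (mBorel_borelSpace m)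
        (Equiv.refl _) hN0 hs0 hα hd x r hr0 hrt
  · refine ⟨1, (2 ^ N * (4 * (N:ℝ)) ^ (∑ k, (s k)⁻¹))⁻¹, one_pos, ?_, ?_⟩
    · exact inv_pos.2
        (mul_pos (pow_pos two_pos N) (Real.rpow_pos_of_pos (by linarith) _))
    · intro x y r t hr ht _ _
      exact @bpi_data (Fin N → ℝ) N s m (mBorel m) (mBorel_borelSpace m)
        (Equiv.refl _) hN0 hs0 hα hd x y r t hr ht
end

section
/- Fix l ∈ ℕ, h = 1/2^l, and define the set of shortcuts S = ⋃_{n≥1} S_n where S_n = {(h^{n-1}(m+1/2), h^{n-1}(m+1/2) + h^{n+1}) : m ∈ ℤ}. Let n ≥ 0 and m ∈ ℤ, and let I = [h^n·m, h^n·(m+1)] be an interval without shortcut at the ends (i.e., no x with (h^n m, x) ∈ S ∪ S^{-1} or (x, h^n(m+1)) ∈ S ∪ S^{-1}). Then for every shortcut (p,q) ∈ S, p ∈ I if and only if q ∈ I. -/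
/-- The self-similar set of shortcuts on `ℝ` with parameter `h = 1/2^l`:
the shortcuts of level `n ≥ 1` are the pairs `(h^{n-1}(m+1/2), h^{n-1}(m+1/2) + h^{n+1})`
for `m ∈ ℤ` (here indexed by `j = n - 1 ∈ ℕ`). -/
def shortcuts (l : ℕ) : Set (ℝ × ℝ) :=
  {pq | ∃ (j : ℕ) (m : ℤ),
    pq.1 = ((1 : ℝ) / 2 ^ l) ^ j * (m + 1 / 2) ∧
    pq.2 = ((1 : ℝ) / 2 ^ l) ^ j * (m + 1 / 2) + ((1 : ℝ) / 2 ^ l) ^ (j + 2)}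

/-- `[a, b]` is an interval without shortcut at the ends: no shortcut (in either
orientation) has `a` or `b` as an endpoint. -/
def NoShortcutAtEnds (l : ℕ) (a b : ℝ) : Prop :=
  ∀ x : ℝ, (a, x) ∉ shortcuts l ∧ (x, a) ∉ shortcuts l ∧
    (b, x) ∉ shortcuts l ∧ (x, b) ∉ shortcuts l

/-- If `I = [h^n m, h^n (m+1)]` is an interval without shortcut at the ends, then for
every shortcut `(p, q)`, `p ∈ I` if and only if `q ∈ I`. -/
theorem shortcut_mem_interval_iff (l : ℕ) (hl : 1 ≤ l) (n : ℕ) (m : ℤ)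
    (hI : NoShortcutAtEnds l (((1 : ℝ) / 2 ^ l) ^ n * m) (((1 : ℝ) / 2 ^ l) ^ n * (m + 1))) :
    ∀ p q : ℝ, (p, q) ∈ shortcuts l →
      (p ∈ Set.Icc (((1 : ℝ) / 2 ^ l) ^ n * m) (((1 : ℝ) / 2 ^ l) ^ n * (m + 1)) ↔
       q ∈ Set.Icc (((1 : ℝ) / 2 ^ l) ^ n * m) (((1 : ℝ) / 2 ^ l) ^ n * (m + 1))) := by
  rintro p q ⟨j, m', hp, hq⟩
  simp only at hp hq
  set H : ℝ := (1:ℝ)/2^l with hHdef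
  have hHpos : (0:ℝ) < H := by positivity
  have hHle : H ≤ 1/2 := by
    rw [hHdef]
    apply one_div_le_one_div_of_le (by norm_num)
    calc (2:ℝ) = 2^1 := (pow_one 2).symm
    _ ≤ 2^l := by exact pow_le_pow_right₀ one_le_two hl
  have hpow : ∀ i : ℕ, H ^ i = 1 / 2 ^ (l * i) := by
    intro i; rw [hHdef, div_pow, one_pow, ← pow_mul]
  have hHnpos : (0:ℝ) < H ^ n := pow_pos hHpos n
  rcases lt_or_ge j n with hjn | hjn
  · -- case j < n : both endpoints of the shortcut lie on the grid (or are handled by k = 1)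
    obtain ⟨k, hk1, hkeq⟩ : ∃ k, 1 ≤ k ∧ n = j + k := ⟨n - j, by omega, by omega⟩
    set M : ℤ := 2 ^ (l * k - 1) * (2 * m' + 1) with hMdef
    have hlk : 1 ≤ l * k := Nat.one_le_iff_ne_zero.mpr (Nat.mul_ne_zero (by omega) (by omega))
    have hhalf : H ^ k * (2:ℝ) ^ (l * k - 1) = 1/2 := by
      rw [hpow k, show l * k = (l * k - 1) + 1 from (Nat.sub_add_cancel hlk).symm, pow_succ]
      field_simp
      simp
    have hM : p = H ^ n * (M : ℝ) := by
      calc p = H^j * ((m':ℝ) + 1/2) := hp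
      _ = H^j * ((H^k * 2^(l*k-1)) * (2*(m':ℝ)+1)) := by rw [hhalf]; ring
      _ = H^n * (M:ℝ) := by rw [hkeq, pow_add, hMdef]; push_cast; ring
    have hpI : p ∉ Set.Icc (H^n*(m:ℝ)) (H^n*((m:ℝ)+1)) := by
      rintro ⟨h1, h2⟩
      rw [hM] at h1 h2
      have e1 : m ≤ M := by
        have := (mul_le_mul_iff_right₀ hHnpos).mp h1; exact_mod_cast this
      have e2 : M ≤ m + 1 := by
        have := (mul_le_mul_iff_right₀ hHnpos).mp h2; exact_mod_cast this
      rcases (by omega : M = m ∨ M = m + 1) with hMm | hMm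
      · have hpa : p = H^n*(m:ℝ) := by rw [hM, hMm]
        exact (hI q).1 ⟨j, m', by rw [← hpa]; exact hp, hq⟩
      · have hpb : p = H^n*((m:ℝ)+1) := by rw [hM, hMm]; push_cast; ring
        exact (hI q).2.2.1 ⟨j, m', by rw [← hpb]; exact hp, hq⟩
    have hqI : q ∉ Set.Icc (H^n*(m:ℝ)) (H^n*((m:ℝ)+1)) := by
      rcases Nat.lt_or_ge k 2 with hk2 | hk2
      · -- k = 1 : q = H^n * (M + H)
        have hk : k = 1 := by omega
        have hqM : q = H^n * ((M:ℝ) + H) := by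
          rw [hq, ← hp, hM, show j + 2 = n + 1 by omega, pow_succ]; ring
        rintro ⟨h1, h2⟩
        rw [hqM] at h1 h2
        have e1 : (m:ℝ) ≤ (M:ℝ) + H := (mul_le_mul_iff_right₀ hHnpos).mp h1
        have e2 : (M:ℝ) + H ≤ (m:ℝ) + 1 := (mul_le_mul_iff_right₀ hHnpos).mp h2
        have l1 : (m:ℝ) - 1 < (M:ℝ) := by linarith
        have l2 : (M:ℝ) < (m:ℝ) + 1 := by linarith
        have l1' : m - 1 < M := by exact_mod_cast l1
        have l2' : M < m + 1 := by exact_mod_cast l2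
        have hMm : M = m := by omega
        have hpa : p = H^n*(m:ℝ) := by rw [hM, hMm]
        exact (hI q).1 ⟨j, m', by rw [← hpa]; exact hp, hq⟩
      · -- k ≥ 2 : q = H^n * (M + 2^(l*(k-2)))
        have hone : H^(k-2) * (2:ℝ)^(l*(k-2)) = 1 := by
          rw [hpow (k-2)]; field_simp
        have hqM : q = H^n * ((M + 2^(l*(k-2)) : ℤ) : ℝ) := by
          have hn' : H^n = H^(j+2) * H^(k-2) := by
            rw [show n = (j+2)+(k-2) by omega, pow_add]
          rw [hq, ← hp, hM, hn']
          push_cast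
          linear_combination (-1 : ℝ) * H^(j+2) * hone
        rintro ⟨h1, h2⟩
        rw [hqM] at h1 h2
        have e1 : m ≤ M + 2^(l*(k-2)) := by
          have := (mul_le_mul_iff_right₀ hHnpos).mp h1; exact_mod_cast this
        have e2 : M + 2^(l*(k-2)) ≤ m + 1 := by
          have := (mul_le_mul_iff_right₀ hHnpos).mp h2; exact_mod_cast this
        rcases (by omega : M + 2^(l*(k-2)) = m ∨ M + 2^(l*(k-2)) = m + 1) with hMm | hMm
        · have hqa : q = H^n*(m:ℝ) := by rw [hqM, hMm]
          exact (hI p).2.1 ⟨j, m', hp, by rw [← hqa]; exact hq⟩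
        · have hqb : q = H^n*((m:ℝ)+1) := by rw [hqM, hMm]; push_cast; ring
          exact (hI p).2.2.2 ⟨j, m', hp, by rw [← hqb]; exact hq⟩
    simp only [hpI, hqI]
  · -- case j ≥ n : both endpoints in the interior of the same grid cell
    obtain ⟨d, hd⟩ : ∃ d, j = n + d := ⟨j - n, by omega⟩
    have key : ∀ k : ℤ, H^j/2 ≤ |p - H^n * k| := by
      intro k
      have hNne : (2*m' + 1 - k * 2^(l*d+1)) ≠ 0 := by
        have he : 2*m' + 1 - k * 2^(l*d+1) = 2*(m' - k * 2^(l*d)) + 1 := by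
          rw [pow_succ]; ring
        rw [he]; omega
      have hN1 : (1:ℝ) ≤ |((2*m' + 1 - k*2^(l*d+1) : ℤ) : ℝ)| := by
        rw [← Int.cast_abs]
        exact_mod_cast Int.one_le_abs hNne
      have e1 : p - H^n*(k:ℝ) = H^n * (((2*m' + 1 - k*2^(l*d+1) : ℤ) : ℝ) / 2^(l*d+1)) := by
        rw [hp, hd, pow_add, hpow d]
        push_cast
        field_simp
        ring
      rw [e1, abs_mul, abs_of_pos hHnpos, abs_div,
        abs_of_pos (by positivity : (0:ℝ) < 2^(l*d+1))]
      have e2 : H^j/2 = H^n * (1/2^(l*d+1)) := by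
        rw [hd, pow_add, hpow d, pow_succ]
        field_simp
      rw [e2]
      gcongr
    have hpq : q = p + H^(j+2) := by rw [hq, ← hp]
    have hsmall : H^(j+2) < H^j/2 := by
      have h4 : H*H ≤ 1/4 := by nlinarith
      have h5 : H^(j+2) = H^j * (H*H) := by ring
      have h6 : H^j * (H*H) ≤ H^j * (1/4) :=
        mul_le_mul_of_nonneg_left h4 (pow_pos hHpos j).le
      have h7 := pow_pos hHpos j
      linarith
    have hlt : p < q := by
      rw [hpq]; linarith [pow_pos hHpos (j+2)]
    simp only [Set.mem_Icc]
    constructor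
    · rintro ⟨h1, h2⟩
      refine ⟨by linarith, ?_⟩
      have kb := key (m+1)
      push_cast at kb
      rw [abs_sub_comm, abs_of_nonneg (by linarith)] at kb
      rw [hpq]; linarith
    · rintro ⟨h1, h2⟩
      refine ⟨?_, by linarith⟩
      by_contra hcon
      push_neg at hcon
      have ka := key m
      rw [abs_sub_comm, abs_of_nonneg (by linarith)] at ka
      rw [hpq] at h1
      linarith
end

section
/- Let s ∈ (0,1), let R be the self-similar shortcut equivalence relation on ℝ (generated by S_n = {(h^{n-1}(m+1/2), h^{n-1}(m+1/2)+h^{n+1}) : m ∈ ℤ}, h = 1/2^l with l chosen so the shortcut conditions hold), and let d_R be the associated quotient semi-distance on (ℝ, |·|^s). Then every Lipschitz function f : ([0,1], d_R) → (ℝ, |x-y|^s) is constant. -/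
/-- The quotient semi-distance associated with a distance function `d` and a relation `R`. -/
noncomputable def quotSemiDist {X : Type*} (d : X → X → ℝ) (R : X → X → Prop) (x y : X) : ℝ :=
  sInf {v : ℝ | ∃ (n : ℕ) (xs ys : ℕ → X),
    R x (xs 0) ∧ (∀ k < n, R (ys k) (xs (k + 1))) ∧ R (ys n) y ∧
    v = ∑ k ∈ Finset.range (n + 1), d (xs k) (ys k)}

/-- The equivalence relation generated by the shortcuts. -/
def Rrel (l : ℕ) (x y : ℝ) : Prop :=
  (x, y) ∈ shortcuts l ∨ (y, x) ∈ shortcuts l ∨ x = y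

/-- If `d` is nonnegative, the quotient semi-distance is nonnegative. -/
lemma quotSemiDist_nonneg' {X : Type*} (d : X → X → ℝ) (hd : ∀ a b, 0 ≤ d a b)
    (R : X → X → Prop) (x y : X) : 0 ≤ quotSemiDist d R x y := by
  apply Real.sInf_nonneg
  rintro v ⟨n, xs, ys, -, -, -, rfl⟩
  exact Finset.sum_nonneg fun k _ => hd _ _

/-- One-chain upper bound for the quotient semi-distance. -/
lemma quotSemiDist_le_of {X : Type*} (d : X → X → ℝ) (hd : ∀ a b, 0 ≤ d a b)
    (R : X → X → Prop) {x y a b : X} (h1 : R x a) (h2 : R b y) :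
    quotSemiDist d R x y ≤ d a b := by
  refine csInf_le ⟨0, ?_⟩ ?_
  · rintro v ⟨n, xs, ys, -, -, -, rfl⟩
    exact Finset.sum_nonneg fun k _ => hd _ _
  · refine ⟨0, fun _ => a, fun _ => b, h1, fun k hk => absurd hk (Nat.not_lt_zero k), h2, ?_⟩
    simp

set_option maxHeartbeats 1000000 in
/-- Let `s ∈ (0,1)` and let `d_R` be the quotient semi-distance on `(ℝ, |·|^s)` coming
from the self-similar shortcut relation with `h = 1/2^l`, where `l` satisfies the shortcut
conditions `μ = h^s ≤ min {1/4, (1-s)^s, (1/2)(2^{l-1}-1)^{s/2}}`. Then every Lipschitz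
function from `([0,1], d_R)` to `(ℝ, |·|^s)` is constant. -/
theorem lipschitz_from_quot_to_snowflake_constant (s : ℝ) (hs0 : 0 < s) (hs1 : s < 1)
    (l : ℕ) (hl : 1 ≤ l)
    (hcond1 : ((1 : ℝ) / 2 ^ l) ^ s ≤ 1 / 4)
    (hcond2 : ((1 : ℝ) / 2 ^ l) ^ s ≤ (1 - s) ^ s)
    (hcond3 : ((1 : ℝ) / 2 ^ l) ^ s ≤ (1 / 2) * ((2 : ℝ) ^ (l - 1) - 1) ^ (s / 2))
    (f : ℝ → ℝ) (L : ℝ)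
    (hf : ∀ x ∈ Set.Icc (0 : ℝ) 1, ∀ y ∈ Set.Icc (0 : ℝ) 1,
      |f x - f y| ^ s ≤ L * quotSemiDist (fun a b => |a - b| ^ s) (Rrel l) x y) :
    ∀ x ∈ Set.Icc (0 : ℝ) 1, ∀ y ∈ Set.Icc (0 : ℝ) 1, f x = f y := by
  set h : ℝ := (1 : ℝ) / 2 ^ l with hh_def
  have h2l : (2 : ℝ) ≤ 2 ^ l := by
    calc (2 : ℝ) = 2 ^ 1 := (pow_one 2).symm
    _ ≤ 2 ^ l := pow_le_pow_right₀ (by norm_num) hl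
  have hh0 : 0 < h := by positivity
  have hhalf : h ≤ 1 / 2 := by
    rw [hh_def, div_le_div_iff₀ (by positivity) (by norm_num)]
    linarith
  have hh1 : h < 1 := lt_of_le_of_lt hhalf (by norm_num)
  have hd_nonneg : ∀ a b : ℝ, 0 ≤ |a - b| ^ s := fun a b => Real.rpow_nonneg (abs_nonneg _) s
  have hRrefl : ∀ a : ℝ, Rrel l a a := fun a => Or.inr (Or.inr rfl)
  set L' : ℝ := max L 0 with hL'_def
  have hL'0 : 0 ≤ L' := le_max_right L 0
  have hf' : ∀ x ∈ Set.Icc (0 : ℝ) 1, ∀ y ∈ Set.Icc (0 : ℝ) 1,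
      |f x - f y| ^ s ≤ L' * quotSemiDist (fun a b => |a - b| ^ s) (Rrel l) x y := by
    intro x hx y hy
    refine (hf x hx y hy).trans ?_
    exact mul_le_mul_of_nonneg_right (le_max_left L 0)
      (quotSemiDist_nonneg' _ hd_nonneg _ _ _)
  set C : ℝ := L' ^ (1 / s) with hC_def
  have hC0 : 0 ≤ C := Real.rpow_nonneg hL'0 _
  -- Euclidean Lipschitz bound
  have lip : ∀ x ∈ Set.Icc (0 : ℝ) 1, ∀ y ∈ Set.Icc (0 : ℝ) 1,
      |f x - f y| ≤ C * |x - y| := by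
    intro x hx y hy
    have h1 : |f x - f y| ^ s ≤ L' * |x - y| ^ s := by
      refine (hf' x hx y hy).trans (mul_le_mul_of_nonneg_left ?_ hL'0)
      exact quotSemiDist_le_of _ hd_nonneg _ (hRrefl x) (hRrefl y)
    have h2 : (C * |x - y|) ^ s = L' * |x - y| ^ s := by
      rw [Real.mul_rpow hC0 (abs_nonneg _), hC_def,
        ← Real.rpow_mul hL'0, one_div_mul_cancel (ne_of_gt hs0), Real.rpow_one]
    by_contra hcon
    push_neg at hcon
    have : (C * |x - y|) ^ s < |f x - f y| ^ s :=
      Real.rpow_lt_rpow (by positivity) hcon hs0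
    rw [h2] at this
    exact absurd h1 (not_le.mpr this)
  -- f identifies shortcut endpoints inside [0,1]
  have short : ∀ (j m : ℕ), h ^ j * ((m : ℝ) + 1) ≤ 1 →
      f (h ^ j * ((m : ℝ) + 1 / 2) + h ^ (j + 2)) = f (h ^ j * ((m : ℝ) + 1 / 2)) := by
    intro j m hm1
    set p : ℝ := h ^ j * ((m : ℝ) + 1 / 2) with hp_def
    set q : ℝ := p + h ^ (j + 2) with hq_def
    have hle : q ≤ h ^ j * ((m : ℝ) + 1) := by
      have : h ^ (j + 2) ≤ h ^ j * (1 / 2) := by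
        have : h ^ (j + 2) = h ^ j * h ^ 2 := by ring
        rw [this]
        refine mul_le_mul_of_nonneg_left ?_ (by positivity)
        nlinarith
      rw [hq_def, hp_def]; nlinarith
    have hp_mem : p ∈ Set.Icc (0 : ℝ) 1 := by
      constructor
      · positivity
      · refine le_trans ?_ hm1
        refine mul_le_mul_of_nonneg_left (by norm_num) (by positivity)
    have hq_mem : q ∈ Set.Icc (0 : ℝ) 1 := by
      constructor
      · have : 0 ≤ p := hp_mem.1
        have : (0:ℝ) < h ^ (j+2) := by positivity
        rw [hq_def]; linarith [hp_mem.1]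
      · exact hle.trans hm1
    have hRpq : Rrel l p q := by
      left
      exact ⟨j, (m : ℤ), by push_cast [hp_def]; ring, by push_cast [hp_def, hq_def]; ring⟩
    have hz : quotSemiDist (fun a b => |a - b| ^ s) (Rrel l) p q = 0 := by
      refine le_antisymm ?_ (quotSemiDist_nonneg' _ hd_nonneg _ _ _)
      have := quotSemiDist_le_of (fun a b => |a - b| ^ s) hd_nonneg (Rrel l)
        hRpq (hRrefl q)
      simpa [Real.zero_rpow (ne_of_gt hs0)] using this
    have := hf' p hp_mem q hq_mem
    rw [hz, mul_zero] at this
    have habs : |f p - f q| = 0 := by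
      by_contra hne
      have hpos : 0 < |f p - f q| := lt_of_le_of_ne (abs_nonneg _) (Ne.symm hne)
      have : 0 < |f p - f q| ^ s := Real.rpow_pos_of_pos hpos s
      linarith
    have := abs_eq_zero.mp habs
    have := sub_eq_zero.mp this
    rw [hq_def, hp_def] at this ⊢
    linarith [this]
  -- the key contraction estimate
  set N : ℕ := 4 ^ l with hN_def
  have hN1 : (N : ℝ) * h ^ 2 = 1 := by
    rw [hN_def, hh_def]
    push_cast
    rw [div_pow, one_pow]
    rw [show ((4:ℝ)^l) = ((2:ℝ)^l)^2 by
      rw [← pow_mul, mul_comm l 2, pow_mul]; norm_num]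
    field_simp
  set i0 : ℕ := 2 ^ (2 * l - 1) with hi0_def
  have hi0N : i0 < N := by
    rw [hi0_def, hN_def]
    calc 2 ^ (2 * l - 1) < 2 ^ (2 * l) := by
          apply Nat.pow_lt_pow_right (by norm_num)
          omega
    _ = 4 ^ l := by rw [pow_mul]; norm_num
  have hi0R : (i0 : ℝ) * h ^ 2 = 1 / 2 := by
    have : (2 : ℝ) * (i0 : ℝ) = (N : ℝ) := by
      rw [hi0_def, hN_def]
      push_cast
      rw [← pow_succ']
      have h21 : 2 * l - 1 + 1 = 2 * l := by omega
      rw [h21, pow_mul]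
      norm_num
    nlinarith [hN1]
  have key : ∀ (k : ℕ) (j m : ℕ), h ^ j * ((m : ℝ) + 1) ≤ 1 →
      |f (h ^ j * ((m : ℝ) + 1)) - f (h ^ j * (m : ℝ))| ≤ C * (1 - h ^ 2) ^ k * h ^ j := by
    intro k
    induction k with
    | zero =>
      intro j m hm1
      have h0 : (0:ℝ) ≤ h ^ j * (m : ℝ) := by positivity
      have hle : h ^ j * (m : ℝ) ≤ h ^ j * ((m : ℝ) + 1) :=
        mul_le_mul_of_nonneg_left (by linarith) (by positivity)
      have := lip (h ^ j * ((m : ℝ) + 1)) ⟨by positivity, hm1⟩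
        (h ^ j * (m : ℝ)) ⟨h0, hle.trans hm1⟩
      calc |f (h ^ j * ((m : ℝ) + 1)) - f (h ^ j * (m : ℝ))|
          ≤ C * |h ^ j * ((m : ℝ) + 1) - h ^ j * (m : ℝ)| := this
        _ = C * (1 - h ^ 2) ^ 0 * h ^ j := by
            rw [pow_zero]
            rw [show h ^ j * ((m : ℝ) + 1) - h ^ j * (m : ℝ) = h ^ j by ring]
            rw [abs_of_pos (by positivity)]
            ring
    | succ k ih =>
      intro j m hm1
      set g : ℕ → ℝ := fun i => f (h ^ (j + 2) * ((N * m + i : ℕ) : ℝ)) with hg_def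
      have hgN : g N = f (h ^ j * ((m : ℝ) + 1)) := by
        show f (h ^ (j + 2) * ((N * m + N : ℕ) : ℝ)) = f (h ^ j * ((m : ℝ) + 1))
        congr 1
        push_cast
        linear_combination (h ^ j * ((m : ℝ) + 1)) * hN1
      have hg0 : g 0 = f (h ^ j * (m : ℝ)) := by
        show f (h ^ (j + 2) * ((N * m + 0 : ℕ) : ℝ)) = f (h ^ j * (m : ℝ))
        congr 1
        push_cast
        linear_combination (h ^ j * (m : ℝ)) * hN1
      have htel : f (h ^ j * ((m : ℝ) + 1)) - f (h ^ j * (m : ℝ))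
          = ∑ i ∈ Finset.range N, (g (i + 1) - g i) := by
        rw [Finset.sum_range_sub g, hgN, hg0]
      -- each subcell is a cell at scale j+2 with index N*m+i
      have hsub : ∀ i : ℕ, i < N →
          |g (i + 1) - g i| ≤ C * (1 - h ^ 2) ^ k * h ^ (j + 2) := by
        intro i hi
        have hcell : h ^ (j + 2) * (((N * m + i : ℕ) : ℝ) + 1) ≤ 1 := by
          refine le_trans ?_ hm1
          have hiN : (i : ℝ) + 1 ≤ (N : ℝ) := by exact_mod_cast Nat.succ_le_of_lt hi
          have hle' : ((N * m + i : ℕ) : ℝ) + 1 ≤ (N : ℝ) * ((m : ℝ) + 1) := by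
            push_cast
            have e : (N : ℝ) * ((m : ℝ) + 1) = (N : ℝ) * (m : ℝ) + (N : ℝ) := by ring
            rw [e]; linarith
          calc h ^ (j + 2) * (((N * m + i : ℕ) : ℝ) + 1)
              ≤ h ^ (j + 2) * ((N : ℝ) * ((m : ℝ) + 1)) :=
                mul_le_mul_of_nonneg_left hle' (by positivity)
            _ = h ^ j * ((m : ℝ) + 1) := by
                linear_combination (h ^ j * ((m : ℝ) + 1)) * hN1
        have hih := ih (j + 2) (N * m + i) hcell
        show |f (h ^ (j + 2) * ((N * m + i + 1 : ℕ) : ℝ))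
            - f (h ^ (j + 2) * ((N * m + i : ℕ) : ℝ))| ≤ C * (1 - h ^ 2) ^ k * h ^ (j + 2)
        rw [show ((N * m + i + 1 : ℕ) : ℝ) = ((N * m + i : ℕ) : ℝ) + 1 by push_cast; ring]
        exact hih
      -- the i0 term vanishes
      have hzero : g (i0 + 1) - g i0 = 0 := by
        have e5 : h ^ (j + 2) * ((N * m + i0 : ℕ) : ℝ) = h ^ j * ((m : ℝ) + 1 / 2) := by
          push_cast
          linear_combination (h ^ j * (m : ℝ)) * hN1 + h ^ j * hi0R
        have e6 : h ^ (j + 2) * ((N * m + (i0 + 1) : ℕ) : ℝ)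
            = h ^ j * ((m : ℝ) + 1 / 2) + h ^ (j + 2) := by
          push_cast
          linear_combination (h ^ j * (m : ℝ)) * hN1 + h ^ j * hi0R
        show f (h ^ (j + 2) * ((N * m + (i0 + 1) : ℕ) : ℝ))
            - f (h ^ (j + 2) * ((N * m + i0 : ℕ) : ℝ)) = 0
        rw [e5, e6, short j m hm1, sub_self]
      -- combine
      have hN0 : 0 < N := by rw [hN_def]; exact pow_pos (by norm_num) l
      calc |f (h ^ j * ((m : ℝ) + 1)) - f (h ^ j * (m : ℝ))|
          = |∑ i ∈ Finset.range N, (g (i + 1) - g i)| := by rw [htel]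
        _ ≤ ∑ i ∈ Finset.range N, |g (i + 1) - g i| := Finset.abs_sum_le_sum_abs _ _
        _ = ∑ i ∈ (Finset.range N).erase i0, |g (i + 1) - g i| := by
            rw [← Finset.add_sum_erase _ _ (Finset.mem_range.mpr hi0N), hzero, abs_zero, zero_add]
        _ ≤ ∑ _i ∈ (Finset.range N).erase i0, (C * (1 - h ^ 2) ^ k * h ^ (j + 2)) := by
            refine Finset.sum_le_sum ?_
            intro i hi
            exact hsub i (Finset.mem_range.mp (Finset.mem_of_mem_erase hi))
        _ = ((N - 1 : ℕ) : ℝ) * (C * (1 - h ^ 2) ^ k * h ^ (j + 2)) := by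
            rw [Finset.sum_const, Finset.card_erase_of_mem (Finset.mem_range.mpr hi0N),
              Finset.card_range, nsmul_eq_mul]
        _ = C * (1 - h ^ 2) ^ (k + 1) * h ^ j := by
            rw [Nat.cast_sub hN0, Nat.cast_one]
            linear_combination (C * (1 - h ^ 2) ^ k * h ^ j) * hN1
  -- all cell increments vanish
  have hcontr : 0 ≤ 1 - h ^ 2 := by nlinarith
  have hcontr1 : 1 - h ^ 2 < 1 := by nlinarith
  have zero : ∀ (j m : ℕ), h ^ j * ((m : ℝ) + 1) ≤ 1 →
      f (h ^ j * ((m : ℝ) + 1)) = f (h ^ j * (m : ℝ)) := by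
    intro j m hm1
    have htend : Filter.Tendsto (fun k : ℕ => C * (1 - h ^ 2) ^ k * h ^ j)
        Filter.atTop (nhds 0) := by
      have := tendsto_pow_atTop_nhds_zero_of_lt_one hcontr hcontr1
      have h1 := this.const_mul C
      have h2 := h1.mul_const (h ^ j)
      simpa using h2
    have hle : |f (h ^ j * ((m : ℝ) + 1)) - f (h ^ j * (m : ℝ))| ≤ 0 :=
      ge_of_tendsto' htend (fun k => key k j m hm1)
    have := abs_eq_zero.mp (le_antisymm hle (abs_nonneg _))
    linarith [sub_eq_zero.mp this]
  -- grid values are all f 0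
  have grid : ∀ (j m : ℕ), h ^ j * (m : ℝ) ≤ 1 → f (h ^ j * (m : ℝ)) = f 0 := by
    intro j m
    induction m with
    | zero => intro _; norm_num
    | succ m ih =>
      intro hm1
      have hmle : h ^ j * (m : ℝ) ≤ 1 := by
        refine le_trans ?_ hm1
        refine mul_le_mul_of_nonneg_left ?_ (by positivity)
        push_cast; linarith
      have := zero j m (by push_cast at hm1 ⊢; linarith)
      rw [show ((m + 1 : ℕ) : ℝ) = (m : ℝ) + 1 by push_cast; ring, this]
      exact ih hmle
  -- conclude
  have const : ∀ x ∈ Set.Icc (0 : ℝ) 1, f x = f 0 := by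
    intro x hx
    obtain ⟨hx0, hx1⟩ := hx
    have hdiff : ∀ j : ℕ, |f x - f 0| ≤ C * h ^ j := by
      intro j
      set m : ℕ := ⌊x / h ^ j⌋₊ with hm_def
      have hjpos : (0:ℝ) < h ^ j := by positivity
      have hm_le : h ^ j * (m : ℝ) ≤ x := by
        rw [mul_comm]
        rw [← le_div_iff₀ hjpos]
        exact Nat.floor_le (by positivity)
      have hm_lt : x - h ^ j * (m : ℝ) < h ^ j := by
        have := Nat.lt_floor_add_one (x / h ^ j)
        have h1 : x / h ^ j < (m : ℝ) + 1 := this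
        have h2 : x < ((m : ℝ) + 1) * h ^ j := by
          rw [← div_lt_iff₀ hjpos] at *
          exact h1
        nlinarith
      have hgridm : f (h ^ j * (m : ℝ)) = f 0 := grid j m (hm_le.trans hx1)
      have hlip := lip x ⟨hx0, hx1⟩ (h ^ j * (m : ℝ))
        ⟨by positivity, hm_le.trans hx1⟩
      rw [hgridm] at hlip
      refine hlip.trans ?_
      refine mul_le_mul_of_nonneg_left ?_ hC0
      rw [abs_of_nonneg (by linarith)]
      linarith
    have htend : Filter.Tendsto (fun j : ℕ => C * h ^ j) Filter.atTop (nhds 0) := by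
      have := tendsto_pow_atTop_nhds_zero_of_lt_one hh0.le hh1
      simpa using this.const_mul C
    have hle : |f x - f 0| ≤ 0 := ge_of_tendsto' htend hdiff
    have := abs_eq_zero.mp (le_antisymm hle (abs_nonneg _))
    linarith [sub_eq_zero.mp this]
  intro x hx y hy
  rw [const x hx, const y hy]
end

section
/- Let x be a Lebesgue density point of a measurable set E ⊆ ℝ^N with respect to an Ahlfors α-regular measure H^α. For all ε > 0 and m ∈ ℕ there exists r_0 > 0 such that: for all r ∈ (0, r_0), every finite family of pairwise non-overlapping congruent cubes {I_j}_{j∈J} covering B(x,r) with H^α(⋃_j I_j) ≤ (1 + ε/m)·H^α(B(x,r)) satisfies #{j ∈ J : H^α(E ∩ I_j)/H^α(I_j) < 1 - 1/m} ≤ ε·#J. -/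
open MeasureTheory Filter
open scoped ENNReal Classical

/-- Let `x` be a density point of a measurable set `E ⊆ ℝ^N` with respect to an Ahlfors
`α`-regular Hausdorff measure `H^α`. For all `ε > 0` and `m ≥ 1` there is `r₀ > 0` such
that: for every `r ∈ (0, r₀)` and every finite family of pairwise non-overlapping
congruent (pairwise translate) measurable cubes covering `B(x,r)` whose union has measure
at most `(1 + ε/m)·H^α(B(x,r))`, the number of cubes `I_j` with
`H^α(E ∩ I_j) < (1 - 1/m)·H^α(I_j)` is at most `ε·#J`. -/
theorem density_point_few_bad_cubes {N : ℕ} (α : ℝ) (hα : 0 < α)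
    (C : ℝ≥0∞) (hC0 : 0 < C) (hCtop : C ≠ ⊤)
    (hreg : ∀ (z : Fin N → ℝ) (r : ℝ), 0 < r →
      C⁻¹ * ENNReal.ofReal r ^ α ≤ μH[α] (Metric.ball z r) ∧
      μH[α] (Metric.ball z r) ≤ C * ENNReal.ofReal r ^ α)
    (E : Set (Fin N → ℝ)) (hE : MeasurableSet E) (x : Fin N → ℝ)
    (hx : Tendsto (fun r : ℝ => μH[α] (E ∩ Metric.ball x r) / μH[α] (Metric.ball x r))
      (nhdsWithin 0 (Set.Ioi 0)) (nhds 1)) :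
    ∀ ε : ℝ, 0 < ε → ∀ m : ℕ, 1 ≤ m → ∃ r₀ : ℝ, 0 < r₀ ∧
      ∀ r : ℝ, 0 < r → r < r₀ →
      ∀ (ι : Type) (J : Finset ι) (I : ι → Set (Fin N → ℝ)),
        (∀ j ∈ J, MeasurableSet (I j)) →
        (∀ j ∈ J, ∀ j' ∈ J, j ≠ j' → μH[α] (I j ∩ I j') = 0) →
        (∀ j ∈ J, ∀ j' ∈ J, ∃ v : Fin N → ℝ, I j' = (fun y => y + v) '' I j) →
        Metric.ball x r ⊆ ⋃ j ∈ J, I j →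
        μH[α] (⋃ j ∈ J, I j) ≤ ENNReal.ofReal (1 + ε / m) * μH[α] (Metric.ball x r) →
        ((J.filter fun j =>
            μH[α] (E ∩ I j) < ENNReal.ofReal (1 - 1 / m) * μH[α] (I j)).card : ℝ) ≤
          ε * (J.card : ℝ) := by
  intro ε hε m hm
  have hm0 : (0:ℝ) < m := by exact_mod_cast Nat.lt_of_lt_of_le Nat.zero_lt_one hm
  have hm1 : (1:ℝ) ≤ m := by exact_mod_cast hm
  set δ : ℝ := min (ε^2/m^2) (1/2) with hδdef
  have hδ0 : 0 < δ := lt_min (by positivity) (by norm_num)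
  have hδ1 : δ < 1 := lt_of_le_of_lt (min_le_right _ _) (by norm_num)
  have hδ' : δ ≤ ε^2/m^2 := min_le_left _ _
  -- density point consequence
  have hev : ∀ᶠ r in nhdsWithin (0:ℝ) (Set.Ioi 0),
      ENNReal.ofReal (1-δ) < μH[α] (E ∩ Metric.ball x r) / μH[α] (Metric.ball x r) :=
    hx.eventually_const_lt (ENNReal.ofReal_lt_one.mpr (by linarith))
  obtain ⟨r₀, hr₀, hsub⟩ := mem_nhdsGT_iff_exists_Ioo_subset.mp hev
  refine ⟨r₀, hr₀, ?_⟩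
  intro r hr hrr₀ ι J I hmeas hdisj hcong hcov hext
  rcases J.eq_empty_or_nonempty with rfl | ⟨j₀, hj₀⟩
  · simp
  -- ball measure facts
  obtain ⟨hbl, hbu⟩ := hreg x r hr
  have hrpow0 : (0:ℝ≥0∞) < ENNReal.ofReal r ^ α :=
    ENNReal.rpow_pos (ENNReal.ofReal_pos.mpr hr) ENNReal.ofReal_ne_top
  have hb0 : (0:ℝ≥0∞) < μH[α] (Metric.ball x r) :=
    lt_of_lt_of_le (ENNReal.mul_pos (ENNReal.inv_ne_zero.mpr hCtop) hrpow0.ne') hbl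
  have hbt : μH[α] (Metric.ball x r) ≠ ⊤ :=
    ne_top_of_le_ne_top
      (ENNReal.mul_ne_top hCtop (ENNReal.rpow_ne_top_of_nonneg hα.le ENNReal.ofReal_ne_top)) hbu
  have hdens : ENNReal.ofReal (1-δ) * μH[α] (Metric.ball x r)
      ≤ μH[α] (E ∩ Metric.ball x r) := by
    have h := hsub ⟨hr, hrr₀⟩
    exact ((ENNReal.lt_div_iff_mul_lt (Or.inl hb0.ne') (Or.inl hbt)).mp h).le
  -- all cubes have the same measure
  set s : ℝ≥0∞ := μH[α] (I j₀) with hsdef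
  have hsame : ∀ j ∈ J, μH[α] (I j) = s := by
    intro j hj
    obtain ⟨v, hv⟩ := hcong j₀ hj₀ j hj
    rw [hv]
    exact Isometry.hausdorffMeasure_image (isometry_add_right v) (Or.inl hα.le) _
  -- union measure
  have hdisj' : (J : Set ι).Pairwise (Function.onFun (MeasureTheory.AEDisjoint μH[α]) I) :=
    fun j hj j' hj' hne => hdisj j hj j' hj' hne
  have hU : μH[α] (⋃ j ∈ J, I j) = (J.card : ℝ≥0∞) * s := by
    rw [measure_biUnion_finset₀ hdisj' (fun j hj => (hmeas j hj).nullMeasurableSet),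
      Finset.sum_congr rfl hsame, Finset.sum_const, nsmul_eq_mul]
  have hcovm : μH[α] (Metric.ball x r) ≤ μH[α] (⋃ j ∈ J, I j) := measure_mono hcov
  have hUt : μH[α] (⋃ j ∈ J, I j) ≠ ⊤ :=
    ne_top_of_le_ne_top (ENNReal.mul_ne_top ENNReal.ofReal_ne_top hbt) hext
  have hst : s ≠ ⊤ :=
    ne_top_of_le_ne_top hUt (measure_mono (Set.subset_biUnion_of_mem (u := I) hj₀))
  have hs0 : s ≠ 0 := by
    intro h
    rw [hU, h, mul_zero] at hcovm
    exact hb0.ne' (le_antisymm hcovm zero_le)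
  set t : ℝ≥0∞ := ENNReal.ofReal (1 - 1/m) with htdef
  set c : ℝ≥0∞ := ENNReal.ofReal (1/m) with hcdef
  have hc0 : c ≠ 0 := by
    rw [hcdef]
    simp only [ne_eq, ENNReal.ofReal_eq_zero, not_le]
    positivity
  have htc : c + t = 1 := by
    rw [hcdef, htdef, ← ENNReal.ofReal_add (by positivity) (by
      have : 1/(m:ℝ) ≤ 1 := by rw [div_le_one hm0]; exact hm1
      linarith)]
    norm_num
  set B := J.filter (fun j => μH[α] (E ∩ I j) < t * μH[α] (I j)) with hB
  -- each bad cube misses E in measure at least c * s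
  have hbad : ∀ j ∈ B, c * s ≤ μH[α] (I j \ E) := by
    intro j hj
    rw [hB, Finset.mem_filter] at hj
    obtain ⟨hjJ, hlt⟩ := hj
    have hIj := hsame j hjJ
    rw [hIj, Set.inter_comm] at hlt
    have hsplit : μH[α] (I j ∩ E) + μH[α] (I j \ E) = s := by
      rw [← hIj]; exact measure_inter_add_diff (I j) hE
    have h2 : s - t * s = c * s :=
      ENNReal.sub_eq_of_eq_add (ENNReal.mul_ne_top ENNReal.ofReal_ne_top hst)
        (by rw [← add_mul, htc, one_mul])
    have hIE : μH[α] (I j ∩ E) ≠ ⊤ := by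
      refine ne_top_of_le_ne_top hst ?_
      rw [← hIj]; exact measure_mono Set.inter_subset_left
    have h1 : s - t * s ≤ μH[α] (I j \ E) := by
      refine (tsub_le_tsub_left hlt.le s).trans ?_
      rw [← hsplit, ENNReal.add_sub_cancel_left hIE]
    exact h2 ▸ h1
  -- sum over bad cubes
  have hsum : (B.card : ℝ≥0∞) * (c * s) ≤ μH[α] ((⋃ j ∈ J, I j) \ E) := by
    have h1 : (B.card : ℝ≥0∞) * (c*s) ≤ ∑ j ∈ B, μH[α] (I j \ E) := by
      rw [← nsmul_eq_mul]
      exact Finset.card_nsmul_le_sum B _ _ hbad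
    have h2 : ∑ j ∈ B, μH[α] (I j \ E) ≤ ∑ j ∈ J, μH[α] (I j \ E) :=
      Finset.sum_le_sum_of_subset (hB ▸ Finset.filter_subset _ _)
    have h3 : ∑ j ∈ J, μH[α] (I j \ E) = μH[α] ((⋃ j ∈ J, I j) \ E) := by
      rw [show ((⋃ j ∈ J, I j) \ E) = ⋃ j ∈ J, (I j \ E) by simp [Set.iUnion_diff]]
      exact (measure_biUnion_finset₀
        (fun j hj j' hj' hne => measure_mono_null
          (Set.inter_subset_inter Set.diff_subset Set.diff_subset) (hdisj j hj j' hj' hne))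
        (fun j hj => ((hmeas j hj).diff hE).nullMeasurableSet)).symm
    exact h1.trans (h2.trans_eq h3)
  -- good part of the union
  set κ : ℝ := (1 - δ) / (1 + ε / m) with hκdef
  have hεm : (0:ℝ) < 1 + ε / m := by positivity
  have hκ0 : 0 < κ := div_pos (by linarith) hεm
  have hκ1 : κ ≤ 1 := by
    rw [hκdef, div_le_one hεm]
    have : 0 ≤ ε / m := by positivity
    linarith
  have hkey : ENNReal.ofReal κ * μH[α] (⋃ j ∈ J, I j) ≤ μH[α] ((⋃ j ∈ J, I j) ∩ E) :=
    calc ENNReal.ofReal κ * μH[α] (⋃ j ∈ J, I j)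
        ≤ ENNReal.ofReal κ * (ENNReal.ofReal (1 + ε/m) * μH[α] (Metric.ball x r)) :=
          mul_le_mul_right hext _
      _ = ENNReal.ofReal (1 - δ) * μH[α] (Metric.ball x r) := by
          rw [← mul_assoc, ← ENNReal.ofReal_mul hκ0.le, hκdef, div_mul_cancel₀ _ hεm.ne']
      _ ≤ μH[α] (E ∩ Metric.ball x r) := hdens
      _ ≤ μH[α] ((⋃ j ∈ J, I j) ∩ E) := measure_mono (fun y hy => ⟨hcov hy.2, hy.1⟩)
  have hUsplit : μH[α] ((⋃ j ∈ J, I j) ∩ E) + μH[α] ((⋃ j ∈ J, I j) \ E)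
      = μH[α] (⋃ j ∈ J, I j) := measure_inter_add_diff _ hE
  have hcancel : (B.card : ℝ≥0∞) * (c * s)
      ≤ ENNReal.ofReal (1 - κ) * μH[α] (⋃ j ∈ J, I j) := by
    have hone : ENNReal.ofReal (1 - κ) + ENNReal.ofReal κ = 1 := by
      rw [← ENNReal.ofReal_add (by linarith) hκ0.le]
      norm_num
    have hmain : (B.card : ℝ≥0∞) * (c * s) + ENNReal.ofReal κ * μH[α] (⋃ j ∈ J, I j)
        ≤ ENNReal.ofReal (1 - κ) * μH[α] (⋃ j ∈ J, I j)
          + ENNReal.ofReal κ * μH[α] (⋃ j ∈ J, I j) :=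
      calc (B.card : ℝ≥0∞) * (c * s) + ENNReal.ofReal κ * μH[α] (⋃ j ∈ J, I j)
          ≤ μH[α] ((⋃ j ∈ J, I j) \ E) + μH[α] ((⋃ j ∈ J, I j) ∩ E) := add_le_add hsum hkey
        _ = μH[α] (⋃ j ∈ J, I j) := by rw [add_comm]; exact hUsplit
        _ = (ENNReal.ofReal (1 - κ) + ENNReal.ofReal κ) * μH[α] (⋃ j ∈ J, I j) := by
            rw [hone, one_mul]
        _ = ENNReal.ofReal (1 - κ) * μH[α] (⋃ j ∈ J, I j)
            + ENNReal.ofReal κ * μH[α] (⋃ j ∈ J, I j) := add_mul _ _ _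
    exact (ENNReal.add_le_add_iff_right
      (ENNReal.mul_ne_top ENNReal.ofReal_ne_top hUt)).mp hmain
  -- numeric inequality : 1 - κ ≤ ε / m
  have hnum : 1 - κ ≤ ε * (1/m) := by
    have hsq : ε^2/m^2 = (ε/m)*(ε/m) := by field_simp
    have h : (1 - ε/m) * (1 + ε/m) ≤ 1 - δ := by nlinarith [hδ'.trans_eq hsq]
    have h2 : 1 - ε/m ≤ κ := by rw [hκdef, le_div_iff₀ hεm]; exact h
    rw [mul_one_div]
    linarith
  have hfinal : (B.card : ℝ≥0∞) ≤ ENNReal.ofReal ε * (J.card : ℝ≥0∞) := by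
    rw [← ENNReal.mul_le_mul_iff_left (mul_ne_zero hc0 hs0)
      (ENNReal.mul_ne_top ENNReal.ofReal_ne_top hst)]
    refine hcancel.trans ?_
    calc ENNReal.ofReal (1 - κ) * μH[α] (⋃ j ∈ J, I j)
        ≤ (ENNReal.ofReal ε * c) * μH[α] (⋃ j ∈ J, I j) := by
          refine mul_le_mul_left ?_ _
          rw [hcdef, ← ENNReal.ofReal_mul hε.le]
          exact ENNReal.ofReal_le_ofReal hnum
      _ = ENNReal.ofReal ε * (J.card : ℝ≥0∞) * (c * s) := by rw [hU]; ring
  have hgoal : ((B.card : ℝ) ≤ ε * (J.card : ℝ)) := by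
    rw [show ((J.card : ℝ≥0∞)) = ENNReal.ofReal (J.card : ℝ) from
        (ENNReal.ofReal_natCast _).symm,
      ← ENNReal.ofReal_mul hε.le,
      show ((B.card : ℝ≥0∞)) = ENNReal.ofReal (B.card : ℝ) from
        (ENNReal.ofReal_natCast _).symm,
      ENNReal.ofReal_le_ofReal_iff (by positivity)] at hfinal
    exact hfinal
  exact hgoal
end
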